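/- arXiv:2008.13293 — 3 statements merged into one kernel-verified Lean document; each statement's English description precedes it below -/
import Mathlib

section
/- Fix a distribution P over a countable measurable space X and a set A of probability distributions on X with P(P̂_n ∈ A) > 0. Then D(μ_A ‖ P^n) = n·D(ω_A ‖ P) + D(μ_A ‖ ω_A^n), where P^n and ω_A^n are the n-fold product distributions of P and ω_A on X^n. Consequently − ln P(P̂_n ∈ A) = n·D(ω_A ‖ P) + D(μ_A ‖ ω_A^n). -/
open scoped ENNReal

/-- Relative entropy (KL divergence) `D(Q ‖ R) = E_{y ∼ Q}[ln (Q y / R y)]`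
for PMFs on a countable type. -/
noncomputable def klDiv {Y : Type*} (Q R : PMF Y) : ℝ :=
  ∑' y, (Q y).toReal * Real.log ((Q y).toReal / (R y).toReal)

/-- Cross entropy `H(Q, P) = E_{y ∼ Q}[ln (1 / P y)]`. -/
noncomputable def crossEnt {Y : Type*} (Q P : PMF Y) : ℝ :=
  ∑' y, (Q y).toReal * Real.log (1 / (P y).toReal)

/-- Entropy `H(Q) = E_{y ∼ Q}[ln (1 / Q y)]`. -/
noncomputable def ent {Y : Type*} (Q : PMF Y) : ℝ :=
  ∑' y, (Q y).toReal * Real.log (1 / (Q y).toReal)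

/-- The `n`-fold product distribution `P^n` on `X^n`, assigning to each
`y ∈ X^n` the probability `∏ i, P (y i)`. -/
noncomputable def piPMF {X : Type*} (n : ℕ) (P : PMF X) : PMF (Fin n → X) :=
  ⟨fun y => ∏ i, P (y i), by
    rw [Summable.hasSum_iff ENNReal.summable]
    induction n with
    | zero =>
      rw [tsum_eq_single (default : Fin 0 → X)
        (fun b hb => absurd (Subsingleton.elim b default) hb)]
      simp
    | succ n ih =>
      rw [← (Fin.consEquiv (fun _ : Fin (n+1) => X)).tsum_eq, ENNReal.tsum_prod']
      simp only [Fin.consEquiv_apply, Fin.prod_univ_succ, Fin.cons_zero, Fin.cons_succ]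
      simp_rw [ENNReal.tsum_mul_left, ih, mul_one]
      exact P.tsum_coe⟩

/-- The empirical measure `μ̂_Z` of a sample `Z ∈ X^n`: it assigns probability
`(1/n) · #{i : Z i = u}` to each point `u`, i.e. it is the pushforward of the
uniform distribution on `Fin n` along `Z`. -/
noncomputable def empiricalPMF {X : Type*} (n : ℕ) [NeZero n] (Z : Fin n → X) : PMF X :=
  (PMF.uniformOfFintype (Fin n)).map Z

/-- `P(P̂_n ∈ A)`: the probability, under an i.i.d. sample `Z ∼ P^n`, that the
empirical measure `μ̂_Z` lies in the set `A` of distributions. -/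
noncomputable def probIn {X : Type*} (n : ℕ) [NeZero n] (P : PMF X) (A : Set (PMF X)) : ℝ≥0∞ :=
  (piPMF n P).toOuterMeasure {Z | empiricalPMF n Z ∈ A}

/-- The convex combination `lam • Q₁ + (1 - lam) • Q₂` of two PMFs. -/
noncomputable def mixPMF {Y : Type*} (lam : ℝ≥0∞) (hlam : lam ≤ 1) (Q₁ Q₂ : PMF Y) : PMF Y :=
  ⟨fun y => lam * Q₁ y + (1 - lam) * Q₂ y, by
    rw [Summable.hasSum_iff ENNReal.summable,
      ENNReal.tsum_add, ENNReal.tsum_mul_left,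
      ENNReal.tsum_mul_left, Q₁.tsum_coe, Q₂.tsum_coe, mul_one, mul_one,
      add_tsub_cancel_of_le hlam]⟩

/-- A set of PMFs is convex if it is closed under convex combinations. -/
def IsConvexPMFSet {Y : Type*} (A : Set (PMF Y)) : Prop :=
  ∀ Q₁ ∈ A, ∀ Q₂ ∈ A, ∀ (lam : ℝ≥0∞) (hlam : lam ≤ 1), mixPMF lam hlam Q₁ Q₂ ∈ A

open scoped Classical

lemma tsum_map_mul {α β : Type*} (q : PMF α) (g : α → β) (e : β → ℝ≥0∞) :
    ∑' a, q a * e (g a) = ∑' b, (q.map g) b * e b := by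
  classical
  have h1 : ∀ b, (q.map g) b * e b = ∑' a, if b = g a then q a * e b else 0 := by
    intro b
    rw [PMF.map_apply, ← ENNReal.tsum_mul_right]
    congr 1; funext a
    by_cases h : b = g a <;> simp [h]
  rw [tsum_congr h1, ENNReal.tsum_comm]
  congr 1; funext a
  rw [tsum_eq_single (g a) (by intro b hb; simp [hb])]
  simp

lemma tsum_pi_prod {X : Type*} (n : ℕ) (g : Fin n → X → ℝ≥0∞) :
    ∑' y : Fin n → X, ∏ j, g j (y j) = ∏ j, ∑' u, g j u := by
  induction n with
  | zero =>
    rw [tsum_eq_single (default : Fin 0 → X)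
      (fun b hb => absurd (Subsingleton.elim b default) hb)]
    simp
  | succ n ih =>
    rw [← (Fin.consEquiv (fun _ : Fin (n+1) => X)).tsum_eq, ENNReal.tsum_prod']
    simp only [Fin.consEquiv_apply, Fin.prod_univ_succ, Fin.cons_zero, Fin.cons_succ]
    simp_rw [ENNReal.tsum_mul_left, ih, ENNReal.tsum_mul_right]

lemma tsum_ite_pmf {X : Type*} (P : PMF X) (u : X) :
    ∑' v, (if u = v then P v else 0) = P u := by
  rw [tsum_eq_single u (fun b hb => if_neg (fun h => hb h.symm))]
  simp

lemma piPMF_map_coord {X : Type*} (n : ℕ) (P : PMF X) (i : Fin n) :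
    (piPMF n P).map (fun y => y i) = P := by
  ext u
  rw [PMF.map_apply]
  have key : ∀ y : Fin n → X, (if u = y i then piPMF n P y else 0)
      = ∏ j, (if j = i then (if u = y j then P (y j) else 0) else P (y j)) := by
    intro y
    by_cases h : u = y i
    · rw [if_pos h]
      show (∏ j, P (y j)) = _
      exact Finset.prod_congr rfl (fun j _ => by by_cases hj : j = i <;> simp [hj, ← h])
    · rw [if_neg h]
      exact (Finset.prod_eq_zero (Finset.mem_univ i) (by simp [h])).symm
  rw [tsum_congr key,
    tsum_pi_prod n (fun j v => if j = i then (if u = v then P v else 0) else P v)]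
  have h2 : ∀ j : Fin n, (∑' v, if j = i then (if u = v then P v else 0) else P v)
      = if j = i then P u else 1 := by
    intro j
    by_cases hj : j = i <;> simp [hj, tsum_ite_pmf P u, P.tsum_coe]
  rw [Finset.prod_congr rfl (fun j _ => h2 j), Finset.prod_ite_eq' Finset.univ i (fun _ => P u)]
  simp

lemma toReal_mul_split (x : ℝ≥0∞) (r : ℝ) :
    x.toReal * r = (x * ENNReal.ofReal r).toReal - (x * ENNReal.ofReal (-r)).toReal := by
  rw [ENNReal.toReal_mul, ENNReal.toReal_mul, ENNReal.toReal_ofReal', ENNReal.toReal_ofReal',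
    ← mul_sub]
  congr 1
  rcases le_total r 0 with h | h
  · simp [sup_eq_right.mpr h, sup_eq_left.mpr (neg_nonneg.mpr h)]
  · simp [sup_eq_left.mpr h, sup_eq_right.mpr (neg_nonpos.mpr h)]

lemma tsum_toReal_map_mul {α β : Type*} (q : PMF α) (g : α → β) (F : β → ℝ)
    (hfin : ∑' b, (q.map g) b * ENNReal.ofReal |F b| ≠ ⊤) :
    Summable (fun a => (q a).toReal * F (g a)) ∧
    Summable (fun b => ((q.map g) b).toReal * F b) ∧
    ∑' a, (q a).toReal * F (g a) = ∑' b, ((q.map g) b).toReal * F b := by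
  set m := q.map g with hm
  have hLe : ∀ e : β → ℝ≥0∞, ∑' a, q a * e (g a) = ∑' b, m b * e b := tsum_map_mul q g
  set Fp : β → ℝ≥0∞ := fun b => ENNReal.ofReal (F b) with hFp
  set Fm : β → ℝ≥0∞ := fun b => ENNReal.ofReal (-F b) with hFm
  have hple : ∀ b, Fp b ≤ ENNReal.ofReal |F b| :=
    fun b => ENNReal.ofReal_le_ofReal (le_abs_self _)
  have hmle : ∀ b, Fm b ≤ ENNReal.ofReal |F b| :=
    fun b => ENNReal.ofReal_le_ofReal (neg_le_abs _)
  have hfinBp : ∑' b, m b * Fp b ≠ ⊤ :=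
    ne_top_of_le_ne_top hfin (ENNReal.tsum_le_tsum fun b => mul_le_mul_right (hple b) _)
  have hfinBm : ∑' b, m b * Fm b ≠ ⊤ :=
    ne_top_of_le_ne_top hfin (ENNReal.tsum_le_tsum fun b => mul_le_mul_right (hmle b) _)
  have hfinAp : ∑' a, q a * Fp (g a) ≠ ⊤ := by rw [hLe]; exact hfinBp
  have hfinAm : ∑' a, q a * Fm (g a) ≠ ⊤ := by rw [hLe]; exact hfinBm
  have sAp : Summable (fun a => (q a * Fp (g a)).toReal) := ENNReal.summable_toReal hfinAp
  have sAm : Summable (fun a => (q a * Fm (g a)).toReal) := ENNReal.summable_toReal hfinAm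
  have sBp : Summable (fun b => (m b * Fp b).toReal) := ENNReal.summable_toReal hfinBp
  have sBm : Summable (fun b => (m b * Fm b).toReal) := ENNReal.summable_toReal hfinBm
  have habs : ∀ (x : ℝ≥0∞) (r : ℝ), (x * ENNReal.ofReal |r|).toReal = |x.toReal * r| := by
    intro x r
    rw [ENNReal.toReal_mul, ENNReal.toReal_ofReal (abs_nonneg r), abs_mul,
      abs_of_nonneg ENNReal.toReal_nonneg]
  have hAsum : Summable (fun a => (q a).toReal * F (g a)) := by
    apply Summable.of_abs
    exact (ENNReal.summable_toReal (by rw [hLe (fun b => ENNReal.ofReal |F b|)]; exact hfin)).congr fun a => habs _ _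
  have hBsum : Summable (fun b => (m b).toReal * F b) := by
    apply Summable.of_abs
    exact (ENNReal.summable_toReal hfin).congr fun b => habs _ _
  refine ⟨hAsum, hBsum, ?_⟩
  have hAval : ∑' a, (q a).toReal * F (g a)
      = (∑' a, q a * Fp (g a)).toReal - (∑' a, q a * Fm (g a)).toReal := by
    rw [ENNReal.tsum_toReal_eq (fun a => ENNReal.mul_ne_top (PMF.apply_ne_top q a)
        ENNReal.ofReal_ne_top),
      ENNReal.tsum_toReal_eq (fun a => ENNReal.mul_ne_top (PMF.apply_ne_top q a)
        ENNReal.ofReal_ne_top), ← Summable.tsum_sub sAp sAm]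
    exact tsum_congr fun a => toReal_mul_split (q a) (F (g a))
  have hBval : ∑' b, (m b).toReal * F b
      = (∑' b, m b * Fp b).toReal - (∑' b, m b * Fm b).toReal := by
    rw [ENNReal.tsum_toReal_eq (fun b => ENNReal.mul_ne_top (PMF.apply_ne_top m b)
        ENNReal.ofReal_ne_top),
      ENNReal.tsum_toReal_eq (fun b => ENNReal.mul_ne_top (PMF.apply_ne_top m b)
        ENNReal.ofReal_ne_top), ← Summable.tsum_sub sBp sBm]
    exact tsum_congr fun b => toReal_mul_split (m b) (F b)
  rw [hAval, hBval, hLe Fp, hLe Fm]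

/-- Lemma 4 of the paper:
`D(μ_A ‖ P^n) = n·D(ω_A ‖ P) + D(μ_A ‖ ω_A^n)`, and consequently
`- ln P(P̂_n ∈ A) = n·D(ω_A ‖ P) + D(μ_A ‖ ω_A^n)`. -/
theorem klDiv_cond_decomposition {X : Type*} [Countable X] [MeasurableSpace X] [MeasurableSingletonClass X]
    (n : ℕ) [NeZero n] (P : PMF X) (A : Set (PMF X))
    (hA : 0 < probIn n P A)
    (μA : PMF (Fin n → X))
    (hμA : ∀ y : Fin n → X,
      μA y = (piPMF n P).toOuterMeasure ({y} ∩ {Z | empiricalPMF n Z ∈ A}) / probIn n P A)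
    (ωA : PMF X)
    (hωA : ∀ i : Fin n, ωA = μA.map (fun Z => Z i)) :
    klDiv μA (piPMF n P) = (n : ℝ) * klDiv ωA P + klDiv μA (piPMF n ωA) ∧
    - Real.log (probIn n P A).toReal = (n : ℝ) * klDiv ωA P + klDiv μA (piPMF n ωA) := by
  classical
  set p := probIn n P A with hpdef
  have hp0 : p ≠ 0 := hA.ne'
  have hp1 : p ≤ 1 := by
    rw [hpdef, probIn, PMF.toOuterMeasure_apply]
    calc ∑' x, Set.indicator {Z | empiricalPMF n Z ∈ A} (⇑(piPMF n P)) x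
        ≤ ∑' x, piPMF n P x :=
          ENNReal.tsum_le_tsum (fun x => Set.indicator_apply_le (fun _ => le_rfl))
      _ = 1 := (piPMF n P).tsum_coe
  have hpt : p ≠ ⊤ := (hp1.trans_lt ENNReal.one_lt_top).ne
  have hptR : 0 < p.toReal := ENNReal.toReal_pos hp0 hpt
  have hptR1 : p.toReal ≤ 1 := by
    have := ENNReal.toReal_mono ENNReal.one_ne_top hp1
    simpa using this
  set c : ℝ := -Real.log p.toReal with hcdef
  have hc0 : 0 ≤ c := by
    rw [hcdef, neg_nonneg]; exact Real.log_nonpos hptR.le hptR1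
  have hlog1p : Real.log (1 / p.toReal) = c := by
    rw [Real.log_div one_ne_zero hptR.ne', Real.log_one, hcdef]; ring
  -- conditional formula
  have hcond : ∀ y, μA y = (if empiricalPMF n y ∈ A then piPMF n P y else 0) / p := by
    intro y
    rw [hμA y]
    congr 1
    rw [PMF.toOuterMeasure_apply,
      tsum_eq_single y (fun b hb => Set.indicator_of_notMem (by simp [hb]) _)]
    by_cases hy : empiricalPMF n y ∈ A
    · rw [Set.indicator_of_mem (show y ∈ ({y} ∩ {Z | empiricalPMF n Z ∈ A}) from ⟨rfl, hy⟩), if_pos hy]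
    · rw [Set.indicator_of_notMem (by simp [hy]), if_neg hy]
  have hμle : ∀ y, μA y ≤ piPMF n P y / p := by
    intro y
    rw [hcond y]
    apply ENNReal.div_le_div_right
    split <;> simp
  have hsupp : ∀ y, μA y ≠ 0 → μA y = piPMF n P y / p ∧ piPMF n P y ≠ 0 := by
    intro y hy
    rw [hcond y] at hy ⊢
    by_cases h : empiricalPMF n y ∈ A
    · rw [if_pos h] at hy ⊢
      exact ⟨rfl, fun h0 => hy (by simp [h0])⟩
    · rw [if_neg h] at hy; simp at hy
  -- marginal facts
  have hωa : ∀ (i : Fin n) (u : X), ωA u = ∑' y, if u = y i then μA y else 0 := by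
    intro i u; rw [hωA i, PMF.map_apply]
  have hμleω : ∀ (i : Fin n) (y : Fin n → X), μA y ≤ ωA (y i) := by
    intro i y
    rw [hωa i (y i)]
    calc μA y = if y i = y i then μA y else 0 := (if_pos rfl).symm
      _ ≤ _ := ENNReal.le_tsum y
  have i0 : Fin n := ⟨0, Nat.pos_of_ne_zero (NeZero.ne n)⟩
  have hK4 : ∀ u, ωA u ≤ P u / p := by
    intro u
    rw [hωa i0 u]
    calc ∑' y, (if u = y i0 then μA y else 0)
        ≤ ∑' y, (if u = y i0 then piPMF n P y else 0) / p := by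
          apply ENNReal.tsum_le_tsum
          intro y
          by_cases h : u = y i0
          · rw [if_pos h, if_pos h]; exact hμle y
          · rw [if_neg h, if_neg h]; simp
      _ = (∑' y, if u = y i0 then piPMF n P y else 0) / p := by
          simp_rw [div_eq_mul_inv, ENNReal.tsum_mul_right]
      _ = P u / p := by
          congr 1
          calc (∑' y, if u = y i0 then piPMF n P y else 0)
              = ((piPMF n P).map (fun y => y i0)) u := (PMF.map_apply _ _ _).symm
            _ = P u := by rw [piPMF_map_coord n P i0]
  have hK4' : ∀ u, ωA u * p ≤ P u := fun u =>
    (ENNReal.le_div_iff_mul_le (Or.inl hp0) (Or.inl hpt)).mp (hK4 u)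
  have hPne0 : ∀ u, ωA u ≠ 0 → P u ≠ 0 := by
    intro u hu h0
    have := hK4' u
    rw [h0, nonpos_iff_eq_zero, mul_eq_zero] at this
    tauto
  have hK4R : ∀ u, (ωA u).toReal * p.toReal ≤ (P u).toReal := by
    intro u
    rw [← ENNReal.toReal_mul]
    exact ENNReal.toReal_mono (PMF.apply_ne_top P u) (hK4' u)
  set F : X → ℝ := fun u => Real.log ((ωA u).toReal / (P u).toReal) with hFdef
  have hFle : ∀ u, ωA u ≠ 0 → F u ≤ c := by
    intro u hu
    have ha : 0 < (ωA u).toReal := ENNReal.toReal_pos hu (PMF.apply_ne_top ωA u)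
    have hb : 0 < (P u).toReal := ENNReal.toReal_pos (hPne0 u hu) (PMF.apply_ne_top P u)
    have hle : (ωA u).toReal / (P u).toReal ≤ 1 / p.toReal := by
      rw [div_le_div_iff₀ hb hptR]
      nlinarith [hK4R u]
    calc F u ≤ Real.log (1 / p.toReal) := Real.log_le_log (by positivity) hle
      _ = c := hlog1p
  have hbound : ∀ u, |(ωA u).toReal * F u| ≤ c * (ωA u).toReal + (P u).toReal := by
    intro u
    by_cases hu : ωA u = 0
    · rw [hu]
      simp only [ENNReal.toReal_zero, zero_mul, abs_zero, mul_zero, zero_add]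
      exact ENNReal.toReal_nonneg
    · have ha : 0 < (ωA u).toReal := ENNReal.toReal_pos hu (PMF.apply_ne_top ωA u)
      have hb : 0 < (P u).toReal := ENNReal.toReal_pos (hPne0 u hu) (PMF.apply_ne_top P u)
      rw [abs_le]
      constructor
      · have h1 : Real.log ((P u).toReal / (ωA u).toReal) ≤ (P u).toReal / (ωA u).toReal - 1 :=
          Real.log_le_sub_one_of_pos (by positivity)
        have h2 : F u = - Real.log ((P u).toReal / (ωA u).toReal) := by
          rw [hFdef, ← Real.log_inv, inv_div]
        have hba : (ωA u).toReal * ((P u).toReal / (ωA u).toReal) = (P u).toReal := by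
          field_simp
        nlinarith [mul_le_mul_of_nonneg_left h1 ha.le, mul_nonneg hc0 ha.le]
      · have := mul_le_mul_of_nonneg_left (hFle u hu) ha.le
        nlinarith
  have hPsumR : Summable (fun u => (P u).toReal) :=
    ENNReal.summable_toReal (by rw [P.tsum_coe]; exact ENNReal.one_ne_top)
  have hωsumR : Summable (fun u => (ωA u).toReal) :=
    ENNReal.summable_toReal (by rw [ωA.tsum_coe]; exact ENNReal.one_ne_top)
  have hfinF : ∑' u, ωA u * ENNReal.ofReal |F u| ≠ ⊤ := by
    have hle : ∀ u, ωA u * ENNReal.ofReal |F u| ≤ ENNReal.ofReal c * ωA u + P u := by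
      intro u
      have he : ωA u * ENNReal.ofReal |F u| = ENNReal.ofReal ((ωA u).toReal * |F u|) := by
        rw [ENNReal.ofReal_mul ENNReal.toReal_nonneg,
          ENNReal.ofReal_toReal (PMF.apply_ne_top ωA u)]
      rw [he]
      have hb' : (ωA u).toReal * |F u| ≤ c * (ωA u).toReal + (P u).toReal := by
        have := hbound u
        rwa [abs_mul, abs_of_nonneg ENNReal.toReal_nonneg] at this
      calc ENNReal.ofReal ((ωA u).toReal * |F u|)
          ≤ ENNReal.ofReal (c * (ωA u).toReal + (P u).toReal) := ENNReal.ofReal_le_ofReal hb'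
        _ ≤ ENNReal.ofReal (c * (ωA u).toReal) + ENNReal.ofReal ((P u).toReal) :=
            ENNReal.ofReal_add_le
        _ = ENNReal.ofReal c * ωA u + P u := by
            rw [ENNReal.ofReal_mul hc0, ENNReal.ofReal_toReal (PMF.apply_ne_top ωA u),
              ENNReal.ofReal_toReal (PMF.apply_ne_top P u)]
    have : ∑' u, ωA u * ENNReal.ofReal |F u| ≤ ENNReal.ofReal c * 1 + 1 := by
      calc ∑' u, ωA u * ENNReal.ofReal |F u| ≤ ∑' u, (ENNReal.ofReal c * ωA u + P u) :=
            ENNReal.tsum_le_tsum hle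
        _ = ENNReal.ofReal c * 1 + 1 := by
            rw [Summable.tsum_add ENNReal.summable ENNReal.summable, ENNReal.tsum_mul_left,
              ωA.tsum_coe, P.tsum_coe]
    exact ne_top_of_le_ne_top (by simp [ENNReal.ofReal_ne_top]) this
  have htrans : ∀ i : Fin n,
      Summable (fun y => (μA y).toReal * F (y i)) ∧
      ∑' y, (μA y).toReal * F (y i) = ∑' u, (ωA u).toReal * F u := by
    intro i
    have h := tsum_toReal_map_mul μA (fun y => y i) F (by rw [← hωA i]; exact hfinF)
    refine ⟨h.1, ?_⟩
    rw [h.2.2, ← hωA i]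
  have hKrfl : klDiv ωA P = ∑' u, (ωA u).toReal * F u := rfl
  -- pointwise term identities
  have hterm1 : ∀ y, (μA y).toReal * Real.log ((μA y).toReal / (piPMF n P y).toReal)
      = (μA y).toReal * c := by
    intro y
    by_cases hy : μA y = 0
    · simp [hy]
    · obtain ⟨hval, hP0⟩ := hsupp y hy
      have hPR : 0 < (piPMF n P y).toReal := ENNReal.toReal_pos hP0 (PMF.apply_ne_top _ _)
      have haR : (μA y).toReal = (piPMF n P y).toReal / p.toReal := by
        rw [hval, ENNReal.toReal_div]
      rw [haR]
      congr 1
      have hq : (piPMF n P y).toReal / p.toReal / (piPMF n P y).toReal = 1 / p.toReal := by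
        field_simp
      rw [hq, hlog1p]
  have hμsumR : Summable (fun y => (μA y).toReal) :=
    ENNReal.summable_toReal (by rw [μA.tsum_coe]; exact ENNReal.one_ne_top)
  have hμ1 : ∑' y, (μA y).toReal = 1 := by
    rw [← ENNReal.tsum_toReal_eq (fun y => PMF.apply_ne_top μA y), μA.tsum_coe,
      ENNReal.toReal_one]
  have hkl1 : klDiv μA (piPMF n P) = c := by
    have : klDiv μA (piPMF n P) = ∑' y, (μA y).toReal * c := tsum_congr hterm1
    rw [this, tsum_mul_right, hμ1, one_mul]
  have hterm2 : ∀ y, (μA y).toReal * Real.log ((μA y).toReal / (piPMF n ωA y).toReal)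
      = (μA y).toReal * c - ∑ i, (μA y).toReal * F (y i) := by
    intro y
    by_cases hy : μA y = 0
    · simp [hy]
    · obtain ⟨hval, hP0⟩ := hsupp y hy
      have hPine : ∀ i, P (y i) ≠ 0 := by
        intro i h
        exact hP0 (Finset.prod_eq_zero (Finset.mem_univ i) h)
      have hωine : ∀ i, ωA (y i) ≠ 0 := by
        intro i h
        exact hy (le_antisymm (h ▸ hμleω i y) zero_le)
      have hPposR : ∀ i, 0 < (P (y i)).toReal :=
        fun i => ENNReal.toReal_pos (hPine i) (PMF.apply_ne_top _ _)
      have hωposR : ∀ i, 0 < (ωA (y i)).toReal :=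
        fun i => ENNReal.toReal_pos (hωine i) (PMF.apply_ne_top _ _)
      have haPos : 0 < (μA y).toReal := ENNReal.toReal_pos hy (PMF.apply_ne_top _ _)
      have hprodP : 0 < ∏ j, (P (y j)).toReal := Finset.prod_pos (fun j _ => hPposR j)
      have hprodω : 0 < ∏ j, (ωA (y j)).toReal := Finset.prod_pos (fun j _ => hωposR j)
      have haR : (μA y).toReal = (∏ j, (P (y j)).toReal) / p.toReal := by
        rw [hval, ENNReal.toReal_div]
        congr 1
        exact (ENNReal.toReal_prod _ _ : (∏ j, P (y j)).toReal = _)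
      have hbR : (piPMF n ωA y).toReal = ∏ j, (ωA (y j)).toReal := (ENNReal.toReal_prod _ _ : (∏ j, ωA (y j)).toReal = _)
      have hFj : ∀ j, F (y j) = Real.log ((ωA (y j)).toReal) - Real.log ((P (y j)).toReal) :=
        fun j => Real.log_div (hωposR j).ne' (hPposR j).ne'
      have hlog : Real.log ((μA y).toReal / (piPMF n ωA y).toReal) = c - ∑ i, F (y i) := by
        rw [hbR, Real.log_div haPos.ne' hprodω.ne', haR,
          Real.log_div hprodP.ne' hptR.ne',
          Real.log_prod (fun j _ => (hPposR j).ne'),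
          Real.log_prod (fun j _ => (hωposR j).ne'),
          Finset.sum_congr rfl (fun j _ => hFj j), Finset.sum_sub_distrib, hcdef]
        ring
      rw [hlog, mul_sub, Finset.mul_sum]
  have hkl2 : klDiv μA (piPMF n ωA) = c - (n : ℝ) * klDiv ωA P := by
    have h0 : klDiv μA (piPMF n ωA)
        = ∑' y, ((μA y).toReal * c - ∑ i, (μA y).toReal * F (y i)) := tsum_congr hterm2
    rw [h0, Summable.tsum_sub (hμsumR.mul_right c) (summable_sum (fun i _ => (htrans i).1)),
      tsum_mul_right, hμ1, one_mul, Summable.tsum_finsetSum (fun i _ => (htrans i).1)]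
    congr 1
    rw [Finset.sum_congr rfl (fun i _ => (htrans i).2), Finset.sum_const, Finset.card_univ,
      Fintype.card_fin, nsmul_eq_mul, hKrfl]
  constructor
  · rw [hkl1, hkl2]; ring
  · rw [hkl2, hkl1.symm.trans hkl1]
    show -Real.log p.toReal = _
    rw [← hcdef]; ring
end

section
/- Fix a distribution P over a countable measurable space X and a set A of probability distributions on X with P(P̂_n ∈ A) > 0. Then (1/n) · ln P(P̂_n ∈ A) ≤ − D(ω_A ‖ P). -/
open scoped ENNReal

lemma piPMF_apply {X : Type*} (n : ℕ) (P : PMF X) (y : Fin n → X) :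
    piPMF n P y = ∏ i, P (y i) := rfl

open scoped Classical in
lemma tsum_pi_prod_one {X : Type*} (P : PMF X) (ι : Type*) [Fintype ι] :
    ∑' g : ι → X, ∏ j, P (g j) = 1 := by
  classical
  set m := Fintype.card ι
  let e : Fin m ≃ ι := (Fintype.equivFin ι).symm
  let E : (Fin m → X) ≃ (ι → X) := Equiv.arrowCongr e (Equiv.refl X)
  rw [← E.tsum_eq]
  have h : ∀ f : Fin m → X, ∏ j : ι, P (E f j) = ∏ k : Fin m, P (f k) := by
    intro f
    refine Fintype.prod_equiv e.symm _ _ fun j => ?_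
    simp [E, Equiv.arrowCongr]
  simp_rw [h]
  have := (piPMF m P).tsum_coe
  simpa [piPMF_apply] using this

open scoped Classical in
lemma piPMF_marginal {X : Type*} (n : ℕ) (P : PMF X) (i : Fin n) (u : X) :
    ∑' Z : Fin n → X, (if u = Z i then piPMF n P Z else 0) = P u := by
  classical
  let e := Equiv.piSplitAt i (fun _ : Fin n => X)
  rw [← e.symm.tsum_eq, ENNReal.tsum_prod']
  have key : ∀ (x : X) (g : {j : Fin n // j ≠ i} → X),
      piPMF n P (e.symm (x, g)) = P x * ∏ j : {j : Fin n // j ≠ i}, P (g j) := by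
    intro x g
    rw [piPMF_apply]
    have hi : e.symm (x, g) i = x := by simp [e, Equiv.piSplitAt_symm_apply]
    rw [← Finset.mul_prod_erase Finset.univ _ (Finset.mem_univ i), hi]
    congr 1
    rw [Finset.prod_subtype (Finset.univ.erase i)
      (p := fun j => j ≠ i) (fun x => by simp) (fun j => P (e.symm (x, g) j))]
    refine Finset.prod_congr rfl fun j _ => ?_
    have : e.symm (x, g) j.1 = g j := by
      simp [e, Equiv.piSplitAt_symm_apply, j.2]
    rw [this]
  have hval : ∀ (x : X) (g : {j : Fin n // j ≠ i} → X),
      (if u = (e.symm (x, g)) i then piPMF n P (e.symm (x, g)) else 0)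
        = (if u = x then P x * ∏ j : {j : Fin n // j ≠ i}, P (g j) else 0) := by
    intro x g
    have hi : e.symm (x, g) i = x := by simp [e, Equiv.piSplitAt_symm_apply]
    rw [hi, key]
  simp_rw [hval]
  have : ∀ x : X, ∑' g : {j : Fin n // j ≠ i} → X,
      (if u = x then P x * ∏ j : {j : Fin n // j ≠ i}, P (g j) else 0)
        = (if u = x then P x else 0) := by
    intro x
    by_cases h : u = x
    · simp only [if_pos h, ENNReal.tsum_mul_left, tsum_pi_prod_one, mul_one]
    · simp [h]
  simp_rw [this]
  rw [tsum_eq_single u (by intro b hb; simp [Ne.symm hb])]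
  simp


/-- Theorem 3, part (1a): `(1/n) ln P(P̂_n ∈ A) ≤ - D(ω_A ‖ P)`. -/
theorem sanov_upper_bound_marginal {X : Type*} [Countable X] [MeasurableSpace X] [MeasurableSingletonClass X]
    (n : ℕ) [NeZero n] (P : PMF X) (A : Set (PMF X))
    (hA : 0 < probIn n P A)
    (μA : PMF (Fin n → X))
    (hμA : ∀ y : Fin n → X,
      μA y = (piPMF n P).toOuterMeasure ({y} ∩ {Z | empiricalPMF n Z ∈ A}) / probIn n P A)
    (ωA : PMF X)
    (hωA : ∀ i : Fin n, ωA = μA.map (fun Z => Z i)) :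
    (1 / (n : ℝ)) * Real.log (probIn n P A).toReal ≤ - klDiv ωA P := by
  classical
  set p : ℝ≥0∞ := probIn n P A with hp_def
  set E : Set (Fin n → X) := {Z | empiricalPMF n Z ∈ A} with hE_def
  have hp0 : p ≠ 0 := hA.ne'
  have hp1 : p ≤ 1 := by
    rw [hp_def, probIn, PMF.toOuterMeasure_apply]
    calc ∑' x, E.indicator (⇑(piPMF n P)) x ≤ ∑' x, piPMF n P x :=
          ENNReal.tsum_le_tsum fun x => Set.indicator_le_self _ _ x
      _ = 1 := (piPMF n P).tsum_coe
  have hpT : p ≠ ⊤ := (lt_of_le_of_lt hp1 (by norm_num)).ne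
  set pr : ℝ := p.toReal with hpr_def
  have hpr0 : 0 < pr := ENNReal.toReal_pos hp0 hpT
  have hpr1 : pr ≤ 1 := by
    rw [hpr_def, ← ENNReal.toReal_one]
    exact (ENNReal.toReal_le_toReal hpT (by norm_num)).2 hp1
  have hlogpr : 0 ≤ -Real.log pr := by
    simpa using Real.log_nonpos hpr0.le hpr1
  -- formula for μA
  have hμ : ∀ y : Fin n → X, μA y = if y ∈ E then piPMF n P y / p else 0 := by
    intro y
    rw [hμA y]
    by_cases hy : y ∈ E
    · rw [if_pos hy, Set.inter_eq_left.mpr (Set.singleton_subset_iff.mpr hy),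
        PMF.toOuterMeasure_apply_singleton]
    · rw [if_neg hy, Set.singleton_inter_eq_empty.mpr hy]
      simp [ENNReal.div_eq_zero_iff, hpT]
  have hμle : ∀ y, μA y ≤ piPMF n P y / p := by
    intro y; rw [hμ y]; split
    · exact le_rfl
    · exact zero_le
  -- real values
  have hμs : Summable (fun y => (μA y).toReal) :=
    ENNReal.summable_toReal (by rw [μA.tsum_coe]; exact ENNReal.one_ne_top)
  have hμsum1 : ∑' y, (μA y).toReal = 1 := by
    rw [← ENNReal.tsum_toReal_eq (fun y => PMF.apply_ne_top _ _), μA.tsum_coe, ENNReal.toReal_one]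
  -- pointwise density value
  have hdens : ∀ y, μA y ≠ 0 →
      (μA y).toReal = (piPMF n P y).toReal / pr ∧ 0 < (piPMF n P y).toReal ∧ 0 < (μA y).toReal := by
    intro y hy
    have h1 : μA y = piPMF n P y / p := by
      by_cases hE : y ∈ E
      · rw [hμ y, if_pos hE]
      · exact absurd (by rw [hμ y, if_neg hE]) hy
    have h2 : (μA y).toReal = (piPMF n P y).toReal / pr := by
      rw [h1, ENNReal.toReal_div]
    have hq : piPMF n P y ≠ 0 := by
      intro h0
      rw [h1, h0, ENNReal.zero_div] at hy
      exact hy rfl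
    have hq' : 0 < (piPMF n P y).toReal := ENNReal.toReal_pos hq (PMF.apply_ne_top _ _)
    refine ⟨h2, hq', ?_⟩
    rw [h2]
    positivity
  -- f and its value
  set f : (Fin n → X) → ℝ :=
    fun y => (μA y).toReal * Real.log ((μA y).toReal / (piPMF n P y).toReal) with hf_def
  have hf_eq : ∀ y, f y = (μA y).toReal * (-Real.log pr) := by
    intro y
    by_cases hy : μA y = 0
    · simp [hf_def, hy]
    · obtain ⟨h2, hq, hm⟩ := hdens y hy
      have : (μA y).toReal / (piPMF n P y).toReal = pr⁻¹ := by
        rw [h2]; field_simp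
      rw [hf_def]
      simp only []
      rw [this, Real.log_inv]
  have hfs : Summable f := by
    rw [funext hf_eq]
    exact hμs.mul_right _
  have hfsum : ∑' y, f y = -Real.log pr := by
    rw [funext hf_eq, tsum_mul_right, hμsum1, one_mul]
  -- ω facts
  have hω_apply : ∀ (i : Fin n) (u : X),
      ωA u = ∑' Z : Fin n → X, (if u = Z i then μA Z else 0) := by
    intro i u
    rw [hωA i, PMF.map_apply]
  have hωle : ∀ u, ωA u ≤ P u / p := by
    intro u
    set i0 : Fin n := ⟨0, Nat.pos_of_ne_zero (NeZero.ne n)⟩ with hi0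
    rw [hω_apply i0 u, ENNReal.div_eq_inv_mul]
    calc ∑' Z : Fin n → X, (if u = Z i0 then μA Z else 0)
        ≤ ∑' Z : Fin n → X, p⁻¹ * (if u = Z i0 then piPMF n P Z else 0) := by
          refine ENNReal.tsum_le_tsum fun Z => ?_
          split
          · rw [← ENNReal.div_eq_inv_mul]; exact hμle Z
          · simp
      _ = p⁻¹ * P u := by rw [ENNReal.tsum_mul_left, piPMF_marginal]
  have hωm : ∀ (i : Fin n) (Z : Fin n → X), μA Z ≤ ωA (Z i) := by
    intro i Z
    rw [hω_apply i (Z i)]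
    exact le_of_eq_of_le (by rw [if_pos rfl]) (ENNReal.le_tsum Z)
  -- the log-likelihood ratio on X
  set h : X → ℝ := fun u => Real.log ((ωA u).toReal / (P u).toReal) with hh_def
  have hkl_eq : klDiv ωA P = ∑' u, (ωA u).toReal * h u := rfl
  have hω_pos : ∀ u, ωA u ≠ 0 →
      0 < (ωA u).toReal ∧ 0 < (P u).toReal ∧ (ωA u).toReal ≤ (P u).toReal / pr := by
    intro u hu
    have hle := hωle u
    have hP0 : P u ≠ 0 := by
      intro h0
      rw [h0, ENNReal.zero_div] at hle
      exact hu (le_antisymm hle zero_le)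
    have hPr : 0 < (P u).toReal := ENNReal.toReal_pos hP0 (PMF.apply_ne_top _ _)
    refine ⟨ENNReal.toReal_pos hu (PMF.apply_ne_top _ _), hPr, ?_⟩
    have hdt : P u / p ≠ ⊤ := (ENNReal.div_lt_top (PMF.apply_ne_top _ _) hp0).ne
    have := (ENNReal.toReal_le_toReal (PMF.apply_ne_top _ _) hdt).2 hle
    rwa [ENNReal.toReal_div] at this
  have h_upper : ∀ u, ωA u ≠ 0 → h u ≤ -Real.log pr := by
    intro u hu
    obtain ⟨hw, hP, hle⟩ := hω_pos u hu
    have hratio : (ωA u).toReal / (P u).toReal ≤ 1 / pr := by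
      rw [div_le_div_iff₀ hP hpr0]
      calc (ωA u).toReal * pr ≤ ((P u).toReal / pr) * pr :=
            mul_le_mul_of_nonneg_right hle hpr0.le
        _ = 1 * (P u).toReal := by field_simp
    calc h u ≤ Real.log (1 / pr) := Real.log_le_log (by positivity) hratio
      _ = -Real.log pr := by rw [one_div, Real.log_inv]
  have hlog_le : ∀ t : ℝ, 0 < t → Real.log t ≤ t * (Real.exp 1)⁻¹ := by
    intro t ht
    have h1 : Real.log (t / Real.exp 1) ≤ t / Real.exp 1 - 1 :=
      Real.log_le_sub_one_of_pos (by positivity)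
    rw [Real.log_div ht.ne' (Real.exp_pos 1).ne', Real.log_exp] at h1
    rw [div_eq_mul_inv] at h1
    linarith
  have h_lower : ∀ u, ωA u ≠ 0 →
      (ωA u).toReal * (-(h u)) ≤ (P u).toReal * (Real.exp 1)⁻¹ := by
    intro u hu
    obtain ⟨hw, hP, _⟩ := hω_pos u hu
    have hneg : -(h u) = Real.log ((P u).toReal / (ωA u).toReal) := by
      rw [hh_def]
      simp only []
      rw [Real.log_div hw.ne' hP.ne', Real.log_div hP.ne' hw.ne']
      ring
    rw [hneg]
    calc (ωA u).toReal * Real.log ((P u).toReal / (ωA u).toReal)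
        ≤ (ωA u).toReal * (((P u).toReal / (ωA u).toReal) * (Real.exp 1)⁻¹) :=
          mul_le_mul_of_nonneg_left (hlog_le _ (by positivity)) hw.le
      _ = (P u).toReal * (Real.exp 1)⁻¹ := by field_simp
  have habs : ∀ u, (ωA u).toReal * |h u| ≤
      (-Real.log pr) * (ωA u).toReal + (P u).toReal * (Real.exp 1)⁻¹ := by
    intro u
    by_cases hu : ωA u = 0
    · rw [hu]
      simp only [ENNReal.toReal_zero, zero_mul, mul_zero, zero_add]
      positivity
    · obtain ⟨hw, hP, _⟩ := hω_pos u hu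
      rcases abs_cases (h u) with ⟨habs', _⟩ | ⟨habs', _⟩
      · rw [habs']
        have h1 : (ωA u).toReal * h u ≤ (-Real.log pr) * (ωA u).toReal := by
          rw [mul_comm ((ωA u).toReal)]
          exact mul_le_mul_of_nonneg_right (h_upper u hu) hw.le
        nlinarith [mul_nonneg (ENNReal.toReal_nonneg : (0:ℝ) ≤ (P u).toReal)
          (inv_nonneg.mpr (Real.exp_pos 1).le)]
      · rw [habs']
        have h1 := h_lower u hu
        nlinarith [mul_nonneg hlogpr hw.le]
  -- finiteness of ∑ ω |h| in ℝ≥0∞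
  have hGfin : ∑' u, ωA u * ENNReal.ofReal |h u| ≠ ⊤ := by
    have hptw : ∀ u, ωA u * ENNReal.ofReal |h u| ≤
        ENNReal.ofReal (-Real.log pr) * ωA u + P u * ENNReal.ofReal (Real.exp 1)⁻¹ := by
      intro u
      have e1 : ωA u * ENNReal.ofReal |h u| = ENNReal.ofReal ((ωA u).toReal * |h u|) := by
        rw [ENNReal.ofReal_mul ENNReal.toReal_nonneg,
          ENNReal.ofReal_toReal (PMF.apply_ne_top _ _)]
      rw [e1]
      calc ENNReal.ofReal ((ωA u).toReal * |h u|)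
          ≤ ENNReal.ofReal ((-Real.log pr) * (ωA u).toReal + (P u).toReal * (Real.exp 1)⁻¹) :=
            ENNReal.ofReal_le_ofReal (habs u)
        _ ≤ ENNReal.ofReal ((-Real.log pr) * (ωA u).toReal)
              + ENNReal.ofReal ((P u).toReal * (Real.exp 1)⁻¹) := ENNReal.ofReal_add_le
        _ = ENNReal.ofReal (-Real.log pr) * ωA u + P u * ENNReal.ofReal (Real.exp 1)⁻¹ := by
            rw [ENNReal.ofReal_mul hlogpr, ENNReal.ofReal_toReal (PMF.apply_ne_top _ _),
              ENNReal.ofReal_mul ENNReal.toReal_nonneg,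
              ENNReal.ofReal_toReal (PMF.apply_ne_top _ _)]
    have hlt : ∑' u, ωA u * ENNReal.ofReal |h u| < ⊤ :=
      calc ∑' u, ωA u * ENNReal.ofReal |h u|
          ≤ ∑' u, (ENNReal.ofReal (-Real.log pr) * ωA u
              + P u * ENNReal.ofReal (Real.exp 1)⁻¹) := ENNReal.tsum_le_tsum hptw
        _ = ENNReal.ofReal (-Real.log pr) + ENNReal.ofReal (Real.exp 1)⁻¹ := by
            rw [ENNReal.tsum_add, ENNReal.tsum_mul_left,
              ENNReal.tsum_mul_right, ωA.tsum_coe, P.tsum_coe, mul_one, one_mul]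
        _ < ⊤ := ENNReal.add_lt_top.2 ⟨ENNReal.ofReal_lt_top, ENNReal.ofReal_lt_top⟩
    exact hlt.ne
  have hkl_abs_s : Summable (fun u => (ωA u).toReal * |h u|) := by
    have := ENNReal.summable_toReal hGfin
    refine this.congr fun u => ?_
    rw [ENNReal.toReal_mul, ENNReal.toReal_ofReal (abs_nonneg _)]
  have hkl_s : Summable (fun u => (ωA u).toReal * h u) := by
    apply summable_abs_iff.mp
    refine hkl_abs_s.congr fun u => ?_
    rw [abs_mul, abs_of_nonneg (ENNReal.toReal_nonneg : (0:ℝ) ≤ (ωA u).toReal)]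
  -- marginal identity for each coordinate
  have hmarg : ∀ i : Fin n, Summable (fun Z : Fin n → X => (μA Z).toReal * h (Z i)) ∧
      ∑' Z : Fin n → X, (μA Z).toReal * h (Z i) = klDiv ωA P := by
    intro i
    set F : X × (Fin n → X) → ℝ :=
      fun q => if q.1 = q.2 i then (μA q.2).toReal * h q.1 else 0 with hF_def
    set G : X × (Fin n → X) → ℝ≥0∞ :=
      fun q => if q.1 = q.2 i then μA q.2 * ENNReal.ofReal |h q.1| else 0 with hG_def
    have hGsum : ∑' q : X × (Fin n → X), G q = ∑' u, ωA u * ENNReal.ofReal |h u| := by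
      rw [ENNReal.tsum_prod']
      refine tsum_congr fun u => ?_
      have hptw : ∀ Z : Fin n → X,
          G (u, Z) = ENNReal.ofReal |h u| * (if u = Z i then μA Z else 0) := by
        intro Z; rw [hG_def]; simp only []; split <;> simp [mul_comm]
      simp_rw [hptw]
      rw [ENNReal.tsum_mul_left, ← hω_apply i u, mul_comm]
    have hGfin' : ∑' q : X × (Fin n → X), G q ≠ ⊤ := by rw [hGsum]; exact hGfin
    have hFabs : ∀ q : X × (Fin n → X), |F q| = (G q).toReal := by
      intro q
      rw [hF_def, hG_def]
      simp only []
      split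
      · rw [abs_mul, abs_of_nonneg (ENNReal.toReal_nonneg : (0:ℝ) ≤ (μA q.2).toReal),
          ENNReal.toReal_mul, ENNReal.toReal_ofReal (abs_nonneg _)]
      · simp
    have hFs : Summable F := by
      apply summable_abs_iff.mp
      exact (ENNReal.summable_toReal hGfin').congr fun q => (hFabs q).symm
    have hemb : Function.Injective (fun Z : Fin n → X => ((Z i, Z) : X × (Fin n → X))) :=
      fun Z₁ Z₂ hq => congrArg Prod.snd hq
    have hsupp : Function.support F ⊆
        Set.range (fun Z : Fin n → X => ((Z i, Z) : X × (Fin n → X))) := by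
      intro q hq
      rcases q with ⟨u, Z⟩
      by_cases hc : u = Z i
      · exact ⟨Z, by rw [hc]⟩
      · exact absurd (by rw [hF_def]; simp only []; rw [if_neg hc]) hq
    have hF1 : ∑' Z : Fin n → X, F (Z i, Z) = ∑' q : X × (Fin n → X), F q := hemb.tsum_eq hsupp
    have hFZ : ∀ Z : Fin n → X, F (Z i, Z) = (μA Z).toReal * h (Z i) := by
      intro Z; rw [hF_def]; simp
    have hslice_e : ∀ u : X, (fun Z : Fin n → X => F (u, Z))
        = fun Z => (if u = Z i then (μA Z).toReal else 0) * h u := by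
      intro u
      funext Z; rw [hF_def]; simp only []; split <;> simp
    have hslice_s : ∀ u : X, Summable (fun Z : Fin n → X => F (u, Z)) := by
      intro u
      rw [hslice_e u]
      refine Summable.mul_right _ (Summable.of_nonneg_of_le (fun Z => ?_) (fun Z => ?_) hμs)
      · split
        · exact ENNReal.toReal_nonneg
        · exact le_rfl
      · split
        · exact le_rfl
        · exact ENNReal.toReal_nonneg
    have hslice : ∀ u : X, ∑' Z : Fin n → X, F (u, Z) = (ωA u).toReal * h u := by
      intro u
      rw [hslice_e u, tsum_mul_right]
      congr 1
      have hptw : ∀ Z : Fin n → X, (if u = Z i then (μA Z).toReal else 0)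
          = ((if u = Z i then μA Z else 0 : ℝ≥0∞)).toReal := by
        intro Z; split <;> simp
      have hne : ∀ Z : Fin n → X, (if u = Z i then μA Z else (0:ℝ≥0∞)) ≠ ⊤ := by
        intro Z; split
        · exact PMF.apply_ne_top _ _
        · exact ENNReal.zero_ne_top
      simp_rw [hptw]
      rw [← ENNReal.tsum_toReal_eq hne, ← hω_apply i u]
    have hF2 : ∑' q : X × (Fin n → X), F q = ∑' u, (ωA u).toReal * h u := by
      rw [Summable.tsum_prod' hFs hslice_s]
      exact tsum_congr hslice
    refine ⟨(hFs.comp_injective hemb).congr (fun Z => hFZ Z), ?_⟩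
    calc ∑' Z : Fin n → X, (μA Z).toReal * h (Z i)
        = ∑' Z : Fin n → X, F (Z i, Z) := tsum_congr fun Z => (hFZ Z).symm
      _ = ∑' q : X × (Fin n → X), F q := hF1
      _ = klDiv ωA P := by rw [hF2, hkl_eq]
  -- g and its sum
  set g : (Fin n → X) → ℝ := fun Z => ∑ i : Fin n, (μA Z).toReal * h (Z i) with hg_def
  have hgs : Summable g := summable_sum fun i _ => (hmarg i).1
  have hgsum : ∑' Z : Fin n → X, g Z = (n : ℝ) * klDiv ωA P := by
    rw [hg_def]
    simp only []
    rw [Summable.tsum_finsetSum fun i _ => (hmarg i).1]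
    have : ∀ i : Fin n, ∑' Z : Fin n → X, (μA Z).toReal * h (Z i) = klDiv ωA P :=
      fun i => (hmarg i).2
    simp_rw [this]
    rw [Finset.sum_const, Finset.card_univ, Fintype.card_fin, nsmul_eq_mul]
  -- the product of marginals
  set W : (Fin n → X) → ℝ := fun Z => ∏ i, (ωA (Z i)).toReal with hW_def
  have hW_eq : ∀ Z, W Z = (piPMF n ωA Z).toReal := by
    intro Z; rw [hW_def]; simp only []; rw [piPMF_apply, ENNReal.toReal_prod]
  have hWnonneg : ∀ Z, 0 ≤ W Z := by
    intro Z; rw [hW_def]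
    exact Finset.prod_nonneg fun i _ => ENNReal.toReal_nonneg
  have hWs : Summable W := by
    rw [funext hW_eq]
    exact ENNReal.summable_toReal (by rw [(piPMF n ωA).tsum_coe]; exact ENNReal.one_ne_top)
  have hWsum : ∑' Z : Fin n → X, W Z = 1 := by
    rw [funext hW_eq, ← ENNReal.tsum_toReal_eq (fun Z => PMF.apply_ne_top _ _),
      (piPMF n ωA).tsum_coe, ENNReal.toReal_one]
  set W' : (Fin n → X) → ℝ := fun Z => if μA Z = 0 then 0 else W Z with hW'_def
  have hW'le : ∀ Z, 0 ≤ W' Z ∧ W' Z ≤ W Z := by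
    intro Z; rw [hW'_def]; simp only []
    split
    · exact ⟨le_rfl, hWnonneg Z⟩
    · exact ⟨hWnonneg Z, le_rfl⟩
  have hW's : Summable W' :=
    Summable.of_nonneg_of_le (fun Z => (hW'le Z).1) (fun Z => (hW'le Z).2) hWs
  have hW'sum : ∑' Z : Fin n → X, W' Z ≤ 1 := by
    rw [← hWsum]
    exact Summable.tsum_le_tsum (fun Z => (hW'le Z).2) hW's hWs
  -- the key pointwise Gibbs inequality
  have hkey : ∀ Z : Fin n → X, (μA Z).toReal - W' Z ≤ f Z - g Z := by
    intro Z
    by_cases hZ : μA Z = 0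
    · have hm0 : (μA Z).toReal = 0 := by rw [hZ]; simp
      have hf0 : f Z = 0 := by rw [hf_def]; simp only []; rw [hm0, zero_mul]
      have hg0 : g Z = 0 := by
        rw [hg_def]; simp only []; rw [hm0]; simp
      have hw0 : W' Z = 0 := by rw [hW'_def]; simp only []; rw [if_pos hZ]
      rw [hm0, hf0, hg0, hw0]
    · obtain ⟨hmq, hq, hm⟩ := hdens Z hZ
      have hwpos : ∀ i : Fin n, 0 < (ωA (Z i)).toReal := by
        intro i
        have h1 : μA Z ≤ ωA (Z i) := hωm i Z
        have h2 : ωA (Z i) ≠ 0 := by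
          intro h0
          rw [h0] at h1
          exact hZ (le_antisymm h1 zero_le)
        exact ENNReal.toReal_pos h2 (PMF.apply_ne_top _ _)
      have hq_prod : (piPMF n P Z).toReal = ∏ i, (P (Z i)).toReal := by
        rw [piPMF_apply, ENNReal.toReal_prod]
      have hPpos : ∀ i : Fin n, 0 < (P (Z i)).toReal := by
        intro i
        rcases (ENNReal.toReal_nonneg : (0:ℝ) ≤ (P (Z i)).toReal).lt_or_eq with h1 | h1
        · exact h1
        · exfalso
          rw [hq_prod] at hq
          have : (∏ i, (P (Z i)).toReal) = 0 :=
            Finset.prod_eq_zero (Finset.mem_univ i) h1.symm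
          rw [this] at hq
          exact lt_irrefl _ hq
      have hWpos : 0 < W Z := by
        rw [hW_def]
        exact Finset.prod_pos fun i _ => hwpos i
      have hW'W : W' Z = W Z := by rw [hW'_def]; simp only []; rw [if_neg hZ]
      -- identity: f Z - g Z = m * log (m / W Z)
      have hfg : f Z - g Z = (μA Z).toReal * Real.log ((μA Z).toReal / W Z) := by
        rw [hf_def, hg_def]
        simp only []
        rw [← Finset.mul_sum, ← mul_sub]
        congr 1
        have hhz : ∀ i : Fin n, h (Z i)
            = Real.log (ωA (Z i)).toReal - Real.log (P (Z i)).toReal := by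
          intro i
          rw [hh_def]
          simp only []
          rw [Real.log_div (hwpos i).ne' (hPpos i).ne']
        rw [Real.log_div hm.ne' hq.ne', Real.log_div hm.ne' hWpos.ne']
        simp_rw [hhz]
        rw [Finset.sum_sub_distrib]
        rw [hq_prod, Real.log_prod fun i _ => (hPpos i).ne']
        rw [hW_def]
        simp only []
        rw [Real.log_prod fun i _ => (hwpos i).ne']
        ring
      rw [hfg, hW'W]
      -- Gibbs: m - W ≤ m log (m / W)
      have h1 : Real.log (W Z / (μA Z).toReal) ≤ W Z / (μA Z).toReal - 1 :=
        Real.log_le_sub_one_of_pos (by positivity)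
      have h2 : Real.log (W Z / (μA Z).toReal) = -Real.log ((μA Z).toReal / W Z) := by
        rw [Real.log_div hWpos.ne' hm.ne', Real.log_div hm.ne' hWpos.ne']
        ring
      rw [h2] at h1
      have h3 : (μA Z).toReal * (-Real.log ((μA Z).toReal / W Z))
          ≤ (μA Z).toReal * (W Z / (μA Z).toReal - 1) :=
        mul_le_mul_of_nonneg_left h1 hm.le
      have h4 : (μA Z).toReal * (W Z / (μA Z).toReal - 1) = W Z - (μA Z).toReal := by
        field_simp
      nlinarith [h3, h4]
  -- put everything together
  have hsub : Summable (fun Z => f Z - g Z) := hfs.sub hgs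
  have hsub2 : Summable (fun Z => (μA Z).toReal - W' Z) := hμs.sub hW's
  have hmain : ∑' Z : Fin n → X, ((μA Z).toReal - W' Z) ≤ ∑' Z : Fin n → X, (f Z - g Z) :=
    Summable.tsum_le_tsum hkey hsub2 hsub
  rw [Summable.tsum_sub hμs hW's, Summable.tsum_sub hfs hgs, hμsum1, hfsum, hgsum] at hmain
  have hn : (0:ℝ) < n := by
    exact_mod_cast Nat.pos_of_ne_zero (NeZero.ne n)
  have h2 : Real.log pr ≤ (n:ℝ) * (-klDiv ωA P) := by linarith
  calc (1 / (n:ℝ)) * Real.log pr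
      ≤ (1/(n:ℝ)) * ((n:ℝ) * (-klDiv ωA P)) :=
        mul_le_mul_of_nonneg_left h2 (by positivity)
    _ = -klDiv ωA P := by field_simp
end

section
/- Fix a distribution P over a countable measurable space X and a convex set A of probability distributions on X with P(P̂_n ∈ A) > 0. Let P*_A be an I-projection of P on A, i.e. P*_A ∈ argmin_{Q ∈ A} D(Q‖P). Then − D(ω_A ‖ P) ≤ − D(P*_A ‖ P); that is, D(P*_A ‖ P) ≤ D(ω_A ‖ P). Consequently (1/n) · ln P(P̂_n ∈ A) ≤ − D(P*_A ‖ P). -/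
open scoped ENNReal

open Filter Topology


lemma abs_tsum_le_tsum_abs {Y : Type*} (f : Y → ℝ) (hf : Summable fun y => |f y|) :
    |∑' y, f y| ≤ ∑' y, |f y| := by
  simpa [Real.norm_eq_abs] using norm_tsum_le_tsum_norm (f := f) (by simpa [Real.norm_eq_abs] using hf)

lemma tendsto_tsum_of_dominated {ι Y : Type*} {l : Filter ι} [l.NeBot]
    {f : ι → Y → ℝ} {F : Y → ℝ} {g : Y → ℝ}
    (hg : Summable g)
    (hbound : ∀ᶠ S in l, ∀ y, |f S y| ≤ g y)
    (hlim : ∀ y, Tendsto (fun S => f S y) l (𝓝 (F y))) :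
    Tendsto (fun S => ∑' y, f S y) l (𝓝 (∑' y, F y)) := by
  have hFg : ∀ y, |F y| ≤ g y := fun y =>
    le_of_tendsto (hlim y).abs (hbound.mono fun S h => h y)
  have hFabs : Summable fun y => |F y| :=
    Summable.of_nonneg_of_le (fun y => abs_nonneg _) hFg hg
  have hF : Summable F := Summable.of_norm (by simpa [Real.norm_eq_abs] using hFabs)
  rw [Metric.tendsto_nhds]
  intro ε hε
  have h4 : (0:ℝ) < ε/4 := by linarith
  obtain ⟨s, hs⟩ : ∃ s : Finset Y, ∑' y : ↑(↑s : Set Y)ᶜ, g ↑y < ε/4 :=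
    ((tendsto_tsum_compl_atTop_zero g).eventually (eventually_lt_nhds h4)).exists
  -- pointwise closeness on s, eventually
  set δ := ε/(4*(s.card+1)) with hδdef
  have hδ : 0 < δ := by positivity
  have hev : ∀ᶠ S in l, ∀ y ∈ s, |f S y - F y| < δ := by
    rw [eventually_all_finset]
    intro y hy
    have := (hlim y).eventually (eventually_abs_sub_lt (F y) hδ)
    exact this.mono fun S h => by simpa [abs_sub_comm] using h
  filter_upwards [hev, hbound] with S hS hSb
  have hfs : Summable fun y => |f S y| :=
    Summable.of_nonneg_of_le (fun y => abs_nonneg _) hSb hg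
  have hfS : Summable (f S) := Summable.of_norm (by simpa [Real.norm_eq_abs] using hfs)
  rw [Real.dist_eq]
  have e1 := Summable.sum_add_tsum_compl (s := s) hfS
  have e2 := Summable.sum_add_tsum_compl (s := s) hF
  have key : ∑' y, f S y - ∑' y, F y
      = (∑ y ∈ s, (f S y - F y)) + ((∑' y : ↑(↑s : Set Y)ᶜ, f S ↑y) - ∑' y : ↑(↑s : Set Y)ᶜ, F ↑y) := by
    rw [Finset.sum_sub_distrib]
    rw [← e1, ← e2]; ring
  rw [key]
  have b1 : |∑ y ∈ s, (f S y - F y)| ≤ ∑ y ∈ s, |f S y - F y| :=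
    Finset.abs_sum_le_sum_abs _ _
  have b1' : ∑ y ∈ s, |f S y - F y| ≤ ∑ y ∈ s, δ :=
    Finset.sum_le_sum fun y hy => le_of_lt (hS y hy)
  have bcard : (∑ y ∈ s, δ) ≤ ε/4 := by
    rw [Finset.sum_const, nsmul_eq_mul, hδdef]
    have hc : (0:ℝ) ≤ (s.card : ℝ) := s.card.cast_nonneg
    have : (s.card : ℝ) * (ε / (4 * ((s.card : ℝ) + 1))) = ((s.card:ℝ) * ε) / (4 * ((s.card:ℝ) + 1)) := by
      ring
    rw [this, div_le_div_iff₀ (by positivity) (by norm_num : (0:ℝ) < 4)]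
    nlinarith
  have b2 : |∑' y : ↑(↑s : Set Y)ᶜ, f S ↑y| ≤ ε/4 := by
    refine le_trans (abs_tsum_le_tsum_abs _ (hfs.subtype _)) ?_
    refine le_trans (Summable.tsum_le_tsum (fun y => hSb y) (hfs.subtype _) (hg.subtype _)) hs.le
  have b3 : |∑' y : ↑(↑s : Set Y)ᶜ, F ↑y| ≤ ε/4 := by
    refine le_trans (abs_tsum_le_tsum_abs _ (hFabs.subtype _)) ?_
    refine le_trans (Summable.tsum_le_tsum (fun y => hFg y) (hFabs.subtype _) (hg.subtype _)) hs.le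
  calc |(∑ y ∈ s, (f S y - F y)) + ((∑' y : ↑(↑s : Set Y)ᶜ, f S ↑y) - ∑' y : ↑(↑s : Set Y)ᶜ, F ↑y)|
      ≤ |∑ y ∈ s, (f S y - F y)| + (|∑' y : ↑(↑s : Set Y)ᶜ, f S ↑y| + |∑' y : ↑(↑s : Set Y)ᶜ, F ↑y|) := by
        refine le_trans (abs_add_le _ _) (by gcongr; exact abs_sub _ _)
    _ < ε := by linarith [le_trans b1 b1']


lemma marginal_ennreal {T X : Type*} (μ : PMF T) (ev : T → X) (f : X → ℝ≥0∞) :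
    ∑' Z, μ Z * f (ev Z) = ∑' u, (μ.map ev) u * f u := by
  classical
  have h1 : ∀ u, (μ.map ev) u * f u = ∑' Z, (if u = ev Z then μ Z * f (ev Z) else 0) := by
    intro u
    rw [PMF.map_apply, ENNReal.tsum_mul_right.symm]
    refine tsum_congr fun Z => ?_
    by_cases h : u = ev Z
    · simp [h]
    · simp [h]
  calc ∑' Z, μ Z * f (ev Z)
      = ∑' Z, ∑' u, (if u = ev Z then μ Z * f (ev Z) else 0) := by
        refine tsum_congr fun Z => ?_
        rw [tsum_ite_eq]
    _ = ∑' u, ∑' Z, (if u = ev Z then μ Z * f (ev Z) else 0) := ENNReal.tsum_comm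
    _ = ∑' u, (μ.map ev) u * f u := by
        refine tsum_congr fun u => (h1 u).symm

lemma tsum_toReal_of_ne_top {Y : Type*} {g : Y → ℝ≥0∞} (h : ∀ y, g y ≠ ∞) :
    ∑' y, (g y).toReal = (∑' y, g y).toReal := (ENNReal.tsum_toReal_eq h).symm

lemma marginal_real_nonneg {T X : Type*} (μ : PMF T) (ev : T → X) (f : X → ℝ)
    (hf : ∀ u, 0 ≤ f u) (hfin : ∑' u, (μ.map ev) u * ENNReal.ofReal (f u) ≠ ∞) :
    (∑' Z, (μ Z).toReal * f (ev Z) = ∑' u, ((μ.map ev) u).toReal * f u)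
    ∧ Summable (fun Z => (μ Z).toReal * f (ev Z))
    ∧ Summable (fun u => ((μ.map ev) u).toReal * f u) := by
  have key := marginal_ennreal μ ev (fun u => ENNReal.ofReal (f u))
  have hne1 : ∀ Z, μ Z * ENNReal.ofReal (f (ev Z)) ≠ ∞ :=
    fun Z => ENNReal.mul_ne_top (μ.apply_ne_top Z) ENNReal.ofReal_ne_top
  have hne2 : ∀ u, (μ.map ev) u * ENNReal.ofReal (f u) ≠ ∞ :=
    fun u => ENNReal.mul_ne_top ((μ.map ev).apply_ne_top u) ENNReal.ofReal_ne_top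
  have ht1 : ∀ Z, (μ Z * ENNReal.ofReal (f (ev Z))).toReal = (μ Z).toReal * f (ev Z) := by
    intro Z; rw [ENNReal.toReal_mul, ENNReal.toReal_ofReal (hf _)]
  have ht2 : ∀ u, ((μ.map ev) u * ENNReal.ofReal (f u)).toReal = ((μ.map ev) u).toReal * f u := by
    intro u; rw [ENNReal.toReal_mul, ENNReal.toReal_ofReal (hf _)]
  have hfin1 : ∑' Z, μ Z * ENNReal.ofReal (f (ev Z)) ≠ ∞ := by rw [key]; exact hfin
  refine ⟨?_, ?_, ?_⟩
  · calc ∑' Z, (μ Z).toReal * f (ev Z)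
        = ∑' Z, (μ Z * ENNReal.ofReal (f (ev Z))).toReal := by
          exact tsum_congr fun Z => (ht1 Z).symm
      _ = (∑' Z, μ Z * ENNReal.ofReal (f (ev Z))).toReal := tsum_toReal_of_ne_top hne1
      _ = (∑' u, (μ.map ev) u * ENNReal.ofReal (f u)).toReal := by rw [key]
      _ = ∑' u, ((μ.map ev) u * ENNReal.ofReal (f u)).toReal := ENNReal.tsum_toReal_eq hne2
      _ = ∑' u, ((μ.map ev) u).toReal * f u := tsum_congr fun u => ht2 u
  · have := ENNReal.summable_toReal hfin1
    exact this.congr fun Z => ht1 Z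
  · have := ENNReal.summable_toReal hfin
    exact this.congr fun u => ht2 u

/-- General signed marginalization. -/
lemma marginal_real {T X : Type*} (μ : PMF T) (ev : T → X) (f : X → ℝ)
    (hfin : ∑' u, (μ.map ev) u * ENNReal.ofReal |f u| ≠ ∞) :
    (∑' Z, (μ Z).toReal * f (ev Z) = ∑' u, ((μ.map ev) u).toReal * f u)
    ∧ Summable (fun Z => (μ Z).toReal * f (ev Z))
    ∧ Summable (fun u => ((μ.map ev) u).toReal * f u) := by
  have hle : ∀ (g : X → ℝ), (∀ u, 0 ≤ g u) → (∀ u, g u ≤ |f u|) →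
      ∑' u, (μ.map ev) u * ENNReal.ofReal (g u) ≠ ∞ := by
    intro g hg hgle
    refine ne_top_of_le_ne_top hfin (Summable.tsum_le_tsum (fun u => ?_) ENNReal.summable ENNReal.summable)
    exact mul_le_mul_right (ENNReal.ofReal_le_ofReal (hgle u)) _
  have hp := marginal_real_nonneg μ ev (fun u => max (f u) 0) (fun u => le_max_right _ _)
    (hle _ (fun u => le_max_right _ _) (fun u => max_le (le_abs_self _) (abs_nonneg _)))
  have hm := marginal_real_nonneg μ ev (fun u => max (-f u) 0) (fun u => le_max_right _ _)
    (hle _ (fun u => le_max_right _ _) (fun u => max_le (neg_le_abs _) (abs_nonneg _)))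
  have hsplit : ∀ u, f u = max (f u) 0 - max (-f u) 0 := by
    intro u; rcases le_total (f u) 0 with h | h
    · rw [max_eq_right h, max_eq_left (by linarith)]; ring
    · rw [max_eq_left h, max_eq_right (by linarith)]; ring
  refine ⟨?_, ?_, ?_⟩
  · calc ∑' Z, (μ Z).toReal * f (ev Z)
        = ∑' Z, ((μ Z).toReal * max (f (ev Z)) 0 - (μ Z).toReal * max (-f (ev Z)) 0) := by
          refine tsum_congr fun Z => ?_
          rw [← mul_sub, ← hsplit (ev Z)]
      _ = (∑' Z, (μ Z).toReal * max (f (ev Z)) 0) - ∑' Z, (μ Z).toReal * max (-f (ev Z)) 0 :=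
          Summable.tsum_sub hp.2.1 hm.2.1
      _ = (∑' u, ((μ.map ev) u).toReal * max (f u) 0) - ∑' u, ((μ.map ev) u).toReal * max (-f u) 0 := by
          rw [hp.1, hm.1]
      _ = ∑' u, ((μ.map ev) u).toReal * f u := by
          rw [← Summable.tsum_sub hp.2.2 hm.2.2]
          refine tsum_congr fun u => ?_
          rw [← mul_sub, ← hsplit u]
  · refine (hp.2.1.sub hm.2.1).congr fun Z => ?_
    rw [← mul_sub, ← hsplit (ev Z)]
  · refine (hp.2.2.sub hm.2.2).congr fun u => ?_
    rw [← mul_sub, ← hsplit u]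


/-- `a·log(a/w) ≥ a - w` for `a, w > 0`. -/
lemma mul_log_div_ge {a w : ℝ} (ha : 0 < a) (hw : 0 < w) :
    a - w ≤ a * Real.log (a / w) := by
  have h1 : Real.log (w / a) ≤ w / a - 1 := Real.log_le_sub_one_of_pos (by positivity)
  have h2 : Real.log (a / w) = - Real.log (w / a) := by
    rw [← Real.log_inv, inv_div]
  rw [h2]
  have := mul_le_mul_of_nonneg_left h1 ha.le
  have h3 : a * (w / a - 1) = w - a := by field_simp
  nlinarith

lemma neg_bound {x p : ℝ} (hx : 0 ≤ x) (hp : 0 < p) :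
    -p ≤ x * Real.log (x / p) := by
  rcases eq_or_lt_of_le hx with h | h
  · simp [← h]; positivity
  · have := mul_log_div_ge h hp
    linarith

/-- Domination bound for terms of the KL sum. -/
lemma abs_mul_log_div_le {x w p : ℝ} (hp : 0 ≤ p) (hw : 0 ≤ w) (hx : 0 ≤ x)
    (hxw : x ≤ 2 * w) :
    |x * Real.log (x / p)| ≤ 2 * max (w * Real.log (w / p)) 0 + 2 * Real.log 2 * w + p := by
  have hlog2 : 0 ≤ Real.log 2 := Real.log_nonneg (by norm_num)
  have hmax0 : (0:ℝ) ≤ max (w * Real.log (w / p)) 0 := le_max_right _ _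
  have hRHS0 : 0 ≤ 2 * max (w * Real.log (w / p)) 0 + 2 * Real.log 2 * w + p := by positivity
  rcases eq_or_lt_of_le hp with hp0 | hp0
  · rw [← hp0, div_zero, Real.log_zero, mul_zero, abs_zero]; positivity
  set t := x * Real.log (x / p) with ht
  have habs : |t| = max t 0 + max (-t) 0 := by
    rcases le_total t 0 with h | h
    · rw [abs_of_nonpos h, max_eq_right h, max_eq_left (by linarith)]; ring
    · rw [abs_of_nonneg h, max_eq_left h, max_eq_right (by linarith)]; ring
  have hneg : max (-t) 0 ≤ p := by
    have := neg_bound hx hp0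
    exact max_le (by linarith) hp0.le
  have hpos : max t 0 ≤ 2 * max (w * Real.log (w / p)) 0 + 2 * Real.log 2 * w := by
    rcases le_total t 0 with h | h
    · rw [max_eq_right h]; positivity
    rcases eq_or_lt_of_le h with h0 | h0
    · rw [max_eq_left h, ← h0]; positivity
    -- t > 0 : then x > 0 and log (x/p) > 0, so x > p
    rw [max_eq_left h]
    have hx0 : 0 < x := by
      rcases eq_or_lt_of_le hx with hh | hh
      · exfalso; rw [ht, ← hh] at h0; simp at h0
      · exact hh
    have hlxp : 0 < Real.log (x / p) := by
      by_contra hcon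
      push_neg at hcon
      have : t ≤ 0 := mul_nonpos_of_nonneg_of_nonpos hx0.le hcon
      linarith
    have hxp : p < x := by
      have : 1 < x / p := by
        by_contra hcon
        push_neg at hcon
        have := Real.log_nonpos (by positivity) hcon
        linarith
      calc p = p * 1 := by ring
        _ < p * (x / p) := by exact mul_lt_mul_of_pos_left this hp0
        _ = x := by field_simp
    have hw0 : 0 < w := by linarith
    have step1 : t ≤ 2 * w * Real.log (x / p) :=
      mul_le_mul_of_nonneg_right hxw hlxp.le
    have step2 : Real.log (x / p) ≤ Real.log (2 * w / p) := by
      have h2w : x / p ≤ 2 * w / p := by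
        gcongr
      exact Real.log_le_log (by positivity) h2w
    have step3 : t ≤ 2 * w * Real.log (2 * w / p) := by
      calc t ≤ 2 * w * Real.log (x / p) := step1
        _ ≤ 2 * w * Real.log (2 * w / p) := by
            exact mul_le_mul_of_nonneg_left step2 (by positivity)
    have hsplit : Real.log (2 * w / p) = Real.log 2 + Real.log (w / p) := by
      rw [show (2 * w / p : ℝ) = 2 * (w / p) by ring]
      rw [Real.log_mul (by norm_num) (by positivity)]
    calc t ≤ 2 * w * Real.log (2 * w / p) := step3
      _ = 2 * Real.log 2 * w + 2 * (w * Real.log (w / p)) := by rw [hsplit]; ring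
      _ ≤ 2 * Real.log 2 * w + 2 * max (w * Real.log (w / p)) 0 := by
          have := le_max_left (w * Real.log (w / p)) 0
          linarith
      _ = 2 * max (w * Real.log (w / p)) 0 + 2 * Real.log 2 * w := by ring
  rw [habs]; linarith

section Mix
variable {X : Type*} (n : ℕ) [NeZero n] (μA : PMF (Fin n → X)) (Q0 : PMF X)

variable {X : Type*} (n : ℕ) [NeZero n] (μA : PMF (Fin n → X)) (Q0 : PMF X)

lemma csum_le_one (S : Finset (Fin n → X)) : ∑ Z ∈ S, μA Z ≤ 1 := by
  refine le_trans (ENNReal.sum_le_tsum S) ?_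
  rw [μA.tsum_coe]

lemma csum_ne_top (S : Finset (Fin n → X)) : ∑ Z ∈ S, μA Z ≠ ∞ :=
  ne_top_of_le_ne_top ENNReal.one_ne_top (csum_le_one n μA S)

lemma mix_tsum (S : Finset (Fin n → X)) :
    ∑' y, ∑ Z ∈ S, μA Z * empiricalPMF n Z y = ∑ Z ∈ S, μA Z := by
  rw [Summable.tsum_finsetSum (fun Z _ => ENNReal.summable)]
  refine Finset.sum_congr rfl fun Z _ => ?_
  rw [ENNReal.tsum_mul_left, (empiricalPMF n Z).tsum_coe, mul_one]

/-- Normalized finite sub-mixture of empirical measures. -/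
noncomputable def mixFin (S : Finset (Fin n → X)) : PMF X :=
  if h : (∑ Z ∈ S, μA Z) = 0 then Q0 else
    ⟨fun y => (∑ Z ∈ S, μA Z * empiricalPMF n Z y) / (∑ Z ∈ S, μA Z), by
      rw [Summable.hasSum_iff ENNReal.summable]
      simp_rw [div_eq_mul_inv, ENNReal.tsum_mul_right, ← div_eq_mul_inv]
      rw [mix_tsum, ENNReal.div_self h (csum_ne_top n μA S)]⟩

lemma mixFin_apply {S : Finset (Fin n → X)} (h : (∑ Z ∈ S, μA Z) ≠ 0) (y : X) :
    mixFin n μA Q0 S y = (∑ Z ∈ S, μA Z * empiricalPMF n Z y) / (∑ Z ∈ S, μA Z) := by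
  exact congrArg (fun q : PMF X => q y) (dif_neg h : mixFin n μA Q0 S = _)

lemma mixFin_mem {A : Set (PMF X)} (hconv : IsConvexPMFSet A) (hQ0 : Q0 ∈ A)
    (hsupp : ∀ Z, μA Z ≠ 0 → empiricalPMF n Z ∈ A) (S : Finset (Fin n → X)) :
    mixFin n μA Q0 S ∈ A := by
  classical
  induction S using Finset.induction_on with
  | empty => rw [mixFin]; simp [hQ0]
  | @insert a S ha ih =>
    by_cases h0 : (∑ Z ∈ insert a S, μA Z) = 0
    · rw [show mixFin n μA Q0 (insert a S) = Q0 from dif_pos h0]; exact hQ0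
    rw [Finset.sum_insert ha] at h0
    by_cases haz : μA a = 0
    · -- mixFin (insert a S) = mixFin S
      have hS0 : (∑ Z ∈ S, μA Z) ≠ 0 := by
        intro h; rw [haz, h, add_zero] at h0; exact h0 rfl
      have : mixFin n μA Q0 (insert a S) = mixFin n μA Q0 S := by
        apply PMF.ext
        intro y
        rw [mixFin_apply n μA Q0 (by rwa [Finset.sum_insert ha, haz, zero_add]) y,
          mixFin_apply n μA Q0 hS0 y, Finset.sum_insert ha, Finset.sum_insert ha,
          haz, zero_mul, zero_add, zero_add]
      rw [this]; exact ih
    by_cases hS0 : (∑ Z ∈ S, μA Z) = 0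
    · -- mixFin (insert a S) = empiricalPMF n a
      have hzero : ∀ Z ∈ S, μA Z = 0 := by
        intro Z hZ
        exact (Finset.sum_eq_zero_iff.1 hS0) Z hZ
      have : mixFin n μA Q0 (insert a S) = empiricalPMF n a := by
        apply PMF.ext
        intro y
        rw [mixFin_apply n μA Q0 (by rwa [Finset.sum_insert ha, hS0, add_zero]) y]
        rw [Finset.sum_insert ha, Finset.sum_insert ha, hS0, add_zero,
          Finset.sum_eq_zero (fun Z hZ => by rw [hzero Z hZ, zero_mul]), add_zero]
        rw [mul_comm, mul_div_assoc, ENNReal.div_self haz (μA.apply_ne_top a), mul_one]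
      rw [this]; exact hsupp a haz
    · -- genuine mixture
      set c := ∑ Z ∈ S, μA Z with hc
      set d := μA a + c with hd
      have hd0 : d ≠ 0 := by rw [hd]; exact fun h => haz (by simpa using (add_eq_zero.1 h).1)
      have hdtop : d ≠ ∞ := by
        rw [hd, ← Finset.sum_insert ha]; exact csum_ne_top n μA _
      have hctop : c ≠ ∞ := csum_ne_top n μA S
      have hlam : μA a / d ≤ 1 := by
        apply ENNReal.div_le_of_le_mul
        rw [one_mul, hd]; exact le_add_right (le_refl _)
      have key : mixFin n μA Q0 (insert a S) =
          mixPMF (μA a / d) hlam (empiricalPMF n a) (mixFin n μA Q0 S) := by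
        apply PMF.ext
        intro y
        rw [mixFin_apply n μA Q0 (by rw [Finset.sum_insert ha, ← hd]; exact hd0) y]
        simp only [Finset.sum_insert ha]
        have hrest : (1 : ℝ≥0∞) - μA a / d = c / d := by
          have hsum : μA a / d + c / d = 1 := by
            rw [ENNReal.div_add_div_same, ← hd, ENNReal.div_self hd0 hdtop]
          rw [← hsum, ENNReal.add_sub_cancel_left]
          exact (ENNReal.div_lt_top (μA.apply_ne_top a) hd0).ne
        show (μA a * empiricalPMF n a y + ∑ Z ∈ S, μA Z * empiricalPMF n Z y) / (μA a + c)
          = (μA a / d) * empiricalPMF n a y + (1 - μA a / d) * mixFin n μA Q0 S y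
        rw [hrest, mixFin_apply n μA Q0 hS0 y, ← hc, ← hd]
        set M := ∑ Z ∈ S, μA Z * empiricalPMF n Z y with hM
        set e := empiricalPMF n a y with he
        rw [div_eq_mul_inv, div_eq_mul_inv, div_eq_mul_inv, div_eq_mul_inv, add_mul]
        congr 1
        · ring
        · calc M * d⁻¹ = M * (c⁻¹ * c) * d⁻¹ := by
                rw [ENNReal.inv_mul_cancel hS0 hctop, mul_one]
            _ = c * d⁻¹ * (M * c⁻¹) := by ring
      rw [key]
      exact hconv _ (hsupp a haz) _ ih _ hlam
end Mix

lemma mul_log_div_eq {x p : ℝ} (hp : p ≠ 0) (hx : 0 ≤ x) :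
    x * Real.log (x / p) = x * Real.log x - x * Real.log p := by
  rcases eq_or_lt_of_le hx with h | h
  · rw [← h]; simp
  · rw [Real.log_div h.ne' hp]; ring

lemma klDiv_le_klDiv_omega {X : Type*} (n : ℕ) [NeZero n] (P : PMF X) (A : Set (PMF X))
    (hconv : IsConvexPMFSet A) (PAstar : PMF X)
    (hmin : ∀ Q ∈ A, klDiv PAstar P ≤ klDiv Q P)
    (μA : PMF (Fin n → X)) (ωA : PMF X)
    (hmarg : ∀ y, ∑' Z, μA Z * empiricalPMF n Z y = ωA y)
    (hsuppA : ∀ Z, μA Z ≠ 0 → empiricalPMF n Z ∈ A)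
    (hSp : ∑' u, ENNReal.ofReal
      (max ((ωA u).toReal * Real.log ((ωA u).toReal / (P u).toReal)) 0) ≠ ∞) :
    klDiv PAstar P ≤ klDiv ωA P := by
  classical
  obtain ⟨Z₀, hZ₀⟩ := μA.support_nonempty
  rw [PMF.mem_support_iff] at hZ₀
  set Q0 := empiricalPMF n Z₀ with hQ0def
  have hQ0 : Q0 ∈ A := hsuppA Z₀ hZ₀
  set w : X → ℝ := fun y => (ωA y).toReal with hw
  set p : X → ℝ := fun y => (P y).toReal with hp
  set f : Finset (Fin n → X) → X → ℝ := fun S y =>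
    ((mixFin n μA Q0 S) y).toReal * Real.log (((mixFin n μA Q0 S) y).toReal / p y) with hf
  set F : X → ℝ := fun y => w y * Real.log (w y / p y) with hF
  set g : X → ℝ := fun y => 2 * max (w y * Real.log (w y / p y)) 0 + 2 * Real.log 2 * w y + p y
    with hg
  -- summability of the dominating function
  have hsum_max : Summable fun y => max (w y * Real.log (w y / p y)) 0 := by
    have := ENNReal.summable_toReal hSp
    refine this.congr fun y => ?_
    rw [ENNReal.toReal_ofReal (le_max_right _ _)]
  have hsum_w : Summable w := by
    refine ENNReal.summable_toReal ?_
    rw [ωA.tsum_coe]; exact ENNReal.one_ne_top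
  have hsum_p : Summable p := by
    refine ENNReal.summable_toReal ?_
    rw [P.tsum_coe]; exact ENNReal.one_ne_top
  have hsum_g : Summable g :=
    (((hsum_max.mul_left 2).add (hsum_w.mul_left (2 * Real.log 2))).add hsum_p)
  -- the partial mass tends to 1
  have hden : Tendsto (fun S : Finset (Fin n → X) => ∑ Z ∈ S, μA Z) atTop (𝓝 1) := by
    have := μA.2
    exact this
  have hev_half : ∀ᶠ S : Finset (Fin n → X) in atTop, 2⁻¹ < ∑ Z ∈ S, μA Z := by
    refine hden.eventually ?_
    exact eventually_gt_nhds (by norm_num)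
  -- domination
  have hbound : ∀ᶠ S : Finset (Fin n → X) in atTop, ∀ y, |f S y| ≤ g y := by
    filter_upwards [hev_half] with S hS y
    have hc0 : (∑ Z ∈ S, μA Z) ≠ 0 := by
      intro h; rw [h] at hS; simp at hS
    have hle : (mixFin n μA Q0 S) y ≤ 2 * ωA y := by
      rw [mixFin_apply n μA Q0 hc0 y]
      have h1 : ∑ Z ∈ S, μA Z * empiricalPMF n Z y ≤ ωA y := by
        rw [← hmarg y]; exact ENNReal.sum_le_tsum S
      calc (∑ Z ∈ S, μA Z * empiricalPMF n Z y) / (∑ Z ∈ S, μA Z)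
          ≤ ωA y / 2⁻¹ := ENNReal.div_le_div h1 hS.le
        _ = 2 * ωA y := by rw [div_eq_mul_inv, inv_inv, mul_comm]
    have hxw : ((mixFin n μA Q0 S) y).toReal ≤ 2 * w y := by
      have h2 : ((2 : ℝ≥0∞) * ωA y).toReal = 2 * w y := by
        rw [ENNReal.toReal_mul]; norm_num; rfl
      rw [← h2]
      exact ENNReal.toReal_mono (ENNReal.mul_ne_top (by norm_num) (ωA.apply_ne_top y)) hle
    exact abs_mul_log_div_le ENNReal.toReal_nonneg ENNReal.toReal_nonneg
      ENNReal.toReal_nonneg hxw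
  -- pointwise convergence
  have hlim : ∀ y, Tendsto (fun S => f S y) atTop (𝓝 (F y)) := by
    intro y
    by_cases hpy : p y = 0
    · have h1 : ∀ S, f S y = 0 := by
        intro S; rw [hf]; simp only [hpy, div_zero, Real.log_zero, mul_zero]
      have h2 : F y = 0 := by rw [hF]; simp only [hpy, div_zero, Real.log_zero, mul_zero]
      rw [h2]
      simpa [h1] using tendsto_const_nhds (α := ℝ) (f := atTop (α := Finset (Fin n → X)))
    · have hnum : Tendsto (fun S : Finset (Fin n → X) => ∑ Z ∈ S, μA Z * empiricalPMF n Z y) atTop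
          (𝓝 (ωA y)) := by
        have : HasSum (fun Z => μA Z * empiricalPMF n Z y) (ωA y) :=
          ENNReal.summable.hasSum_iff.2 (hmarg y)
        exact this
      have hdiv : Tendsto (fun S : Finset (Fin n → X) =>
          (∑ Z ∈ S, μA Z * empiricalPMF n Z y) / (∑ Z ∈ S, μA Z)) atTop (𝓝 (ωA y)) := by
        have := ENNReal.Tendsto.div hnum (Or.inr one_ne_zero) hden (Or.inl ENNReal.one_ne_top)
        simpa using this
      have hcongr : ∀ᶠ S : Finset (Fin n → X) in atTop, (∑ Z ∈ S, μA Z * empiricalPMF n Z y) /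
          (∑ Z ∈ S, μA Z) = (mixFin n μA Q0 S) y := by
        filter_upwards [hev_half] with S hS
        have hc0 : (∑ Z ∈ S, μA Z) ≠ 0 := by intro h; rw [h] at hS; simp at hS
        rw [mixFin_apply n μA Q0 hc0 y]
      have hdiv' : Tendsto (fun S : Finset (Fin n → X) => (mixFin n μA Q0 S) y) atTop (𝓝 (ωA y)) :=
        hdiv.congr' hcongr
      have htr : Tendsto (fun S : Finset (Fin n → X) => ((mixFin n μA Q0 S) y).toReal) atTop
          (𝓝 (w y)) :=
        (ENNReal.tendsto_toReal (ωA.apply_ne_top y)).comp hdiv'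
      have hG : Continuous fun x : ℝ => x * Real.log x - x * Real.log (p y) :=
        Real.continuous_mul_log.sub (continuous_id.mul continuous_const)
      have hcomp : Tendsto (fun S : Finset (Fin n → X) =>
          ((mixFin n μA Q0 S) y).toReal * Real.log ((mixFin n μA Q0 S) y).toReal
          - ((mixFin n μA Q0 S) y).toReal * Real.log (p y)) atTop
          (𝓝 (w y * Real.log (w y) - w y * Real.log (p y))) :=
        (hG.tendsto (w y)).comp htr
      have heq : ∀ S : Finset (Fin n → X), f S y =
          ((mixFin n μA Q0 S) y).toReal * Real.log ((mixFin n μA Q0 S) y).toReal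
          - ((mixFin n μA Q0 S) y).toReal * Real.log (p y) := by
        intro S; rw [hf]
        exact mul_log_div_eq hpy ENNReal.toReal_nonneg
      have heqF : F y = w y * Real.log (w y) - w y * Real.log (p y) :=
        mul_log_div_eq hpy ENNReal.toReal_nonneg
      rw [heqF]
      exact hcomp.congr fun S => (heq S).symm
  have hmain : Tendsto (fun S => ∑' y, f S y) atTop (𝓝 (∑' y, F y)) :=
    tendsto_tsum_of_dominated hsum_g hbound hlim
  have hklS : ∀ S, klDiv (mixFin n μA Q0 S) P = ∑' y, f S y := fun S => rfl
  have hklω : klDiv ωA P = ∑' y, F y := rfl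
  rw [hklω]
  refine ge_of_tendsto hmain ?_
  filter_upwards with S
  rw [← hklS S]
  exact hmin _ (mixFin_mem n μA Q0 hconv hQ0 hsuppA S)


/-- Theorem 3, part (1b). -/
theorem sanov_upper_bound_Iprojection {X : Type*} [Countable X] [MeasurableSpace X] [MeasurableSingletonClass X]
    (n : ℕ) [NeZero n] (P : PMF X) (A : Set (PMF X))
    (hA : 0 < probIn n P A)
    (hconv : IsConvexPMFSet A)
    (PAstar : PMF X) (hmem : PAstar ∈ A)
    (hmin : ∀ Q ∈ A, klDiv PAstar P ≤ klDiv Q P)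
    (μA : PMF (Fin n → X))
    (hμA : ∀ y : Fin n → X,
      μA y = (piPMF n P).toOuterMeasure ({y} ∩ {Z | empiricalPMF n Z ∈ A}) / probIn n P A)
    (ωA : PMF X)
    (hωA : ∀ i : Fin n, ωA = μA.map (fun Z => Z i)) :
    klDiv PAstar P ≤ klDiv ωA P ∧
    (1 / (n : ℝ)) * Real.log (probIn n P A).toReal ≤ - klDiv PAstar P := by
  classical
  -- basic facts about the probability of the event
  have hPEle1 : probIn n P A ≤ 1 := by
    rw [probIn, PMF.toOuterMeasure_apply]
    refine le_trans (Summable.tsum_le_tsum (fun Z => Set.indicator_le_self _ _ Z)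
      ENNReal.summable ENNReal.summable) ?_
    rw [(piPMF n P).tsum_coe]
  have hPE0 : probIn n P A ≠ 0 := hA.ne'
  have hPEtop : probIn n P A ≠ ∞ := ne_top_of_le_ne_top ENNReal.one_ne_top hPEle1
  have hPErpos : 0 < (probIn n P A).toReal := ENNReal.toReal_pos hPE0 hPEtop
  have hPErle1 : (probIn n P A).toReal ≤ 1 := by
    have := ENNReal.toReal_mono ENNReal.one_ne_top hPEle1
    simpa using this
  set c0 : ℝ := - Real.log (probIn n P A).toReal with hc0def
  have hc0 : 0 ≤ c0 := by
    rw [hc0def, neg_nonneg]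
    exact Real.log_nonpos hPErpos.le hPErle1
  -- explicit formula for μA
  have hμA_eq : ∀ Z, μA Z = if empiricalPMF n Z ∈ A then piPMF n P Z / probIn n P A else 0 := by
    intro Z
    rw [hμA Z]
    by_cases h : empiricalPMF n Z ∈ A
    · rw [if_pos h]
      have hset : ({Z} : Set (Fin n → X)) ∩ {W | empiricalPMF n W ∈ A} = {Z} := by
        refine Set.inter_eq_left.2 ?_
        intro W hW
        rw [Set.mem_singleton_iff] at hW
        subst hW; exact h
      rw [hset, PMF.toOuterMeasure_apply_singleton]
    · rw [if_neg h]
      have hset : ({Z} : Set (Fin n → X)) ∩ {W | empiricalPMF n W ∈ A} = ∅ := by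
        ext W
        simp only [Set.mem_inter_iff, Set.mem_singleton_iff, Set.mem_setOf_eq,
          Set.mem_empty_iff_false, iff_false, not_and]
        rintro rfl; exact h
      rw [hset]
      simp [PMF.toOuterMeasure_apply, ENNReal.zero_div]
  have hsuppA : ∀ Z, μA Z ≠ 0 → empiricalPMF n Z ∈ A := by
    intro Z h
    by_contra hc
    rw [hμA_eq Z, if_neg hc] at h
    exact h rfl
  have hsuppP : ∀ Z, μA Z ≠ 0 → piPMF n P Z ≠ 0 := by
    intro Z h hz
    have hAm := hsuppA Z h
    rw [hμA_eq Z, if_pos hAm, hz, ENNReal.zero_div] at h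
    exact h rfl
  have hpiP : ∀ (Q : PMF X) (Z : Fin n → X), piPMF n Q Z = ∏ i, Q (Z i) := fun Q Z => rfl
  -- the key pointwise identity: on the support, the density ratio is constant
  have hK1 : ∀ Z, (μA Z).toReal * Real.log ((μA Z).toReal / (piPMF n P Z).toReal)
      = (μA Z).toReal * c0 := by
    intro Z
    by_cases h : μA Z = 0
    · rw [h]; simp
    · have hpZ : piPMF n P Z ≠ 0 := hsuppP Z h
      have hpZt : piPMF n P Z ≠ ∞ := (piPMF n P).apply_ne_top Z
      have hμval : μA Z = piPMF n P Z / probIn n P A := by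
        rw [hμA_eq Z, if_pos (hsuppA Z h)]
      have h1 : (μA Z).toReal = (piPMF n P Z).toReal / (probIn n P A).toReal := by
        rw [hμval, ENNReal.toReal_div]
      have hpzr : (piPMF n P Z).toReal ≠ 0 := ENNReal.toReal_ne_zero.2 ⟨hpZ, hpZt⟩
      have h2 : (μA Z).toReal / (piPMF n P Z).toReal = ((probIn n P A).toReal)⁻¹ := by
        rw [h1]; field_simp [hpzr, hPErpos.ne']
      rw [h2, Real.log_inv, hc0def]
  -- support facts for ω
  have i0 : Fin n := ⟨0, Nat.pos_of_ne_zero (NeZero.ne n)⟩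
  have hωZ : ∀ Z, μA Z ≠ 0 → ∀ i, ωA (Z i) ≠ 0 := by
    intro Z h i
    have h1 : μA Z ≤ ωA (Z i) := by
      rw [hωA i, PMF.map_apply]
      have := ENNReal.le_tsum (f := fun Z' => if Z i = Z' i then μA Z' else 0) Z
      simpa using this
    exact fun h0 => h (le_antisymm (h0 ▸ h1) zero_le)
  have hPZi : ∀ Z, μA Z ≠ 0 → ∀ i, P (Z i) ≠ 0 := by
    intro Z h i
    have := hsuppP Z h
    rw [hpiP] at this
    exact Finset.prod_ne_zero_iff.1 this i (Finset.mem_univ i)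
  have hωuP : ∀ u, ωA u ≠ 0 → P u ≠ 0 := by
    intro u hu
    rw [hωA i0, PMF.map_apply] at hu
    have : ∃ Z, (if u = Z i0 then μA Z else 0) ≠ 0 := by
      by_contra hc
      push_neg at hc
      rw [tsum_congr (fun Z => hc Z), tsum_zero] at hu
      exact hu rfl
    obtain ⟨Z, hZ⟩ := this
    by_cases h : u = Z i0
    · rw [if_pos h] at hZ
      rw [h]; exact hPZi Z hZ i0
    · rw [if_neg h] at hZ; exact absurd rfl hZ
  set φ : X → ℝ := fun u => Real.log ((ωA u).toReal / (P u).toReal) with hφdef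
  -- the per-sample inequality (Csiszár's key step)
  have hK3 : ∀ Z, (μA Z).toReal * (∑ i, φ (Z i))
      ≤ (μA Z).toReal * c0 - (μA Z).toReal + ∏ i, (ωA (Z i)).toReal := by
    intro Z
    by_cases h : μA Z = 0
    · rw [h]
      simp only [ENNReal.toReal_zero, zero_mul, zero_sub, neg_zero, zero_add]
      exact Finset.prod_nonneg fun i _ => ENNReal.toReal_nonneg
    · have ha : 0 < (μA Z).toReal := ENNReal.toReal_pos h (μA.apply_ne_top Z)
      have hwi : ∀ i : Fin n, 0 < (ωA (Z i)).toReal :=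
        fun i => ENNReal.toReal_pos (hωZ Z h i) (ωA.apply_ne_top _)
      have hpi : ∀ i : Fin n, 0 < (P (Z i)).toReal :=
        fun i => ENNReal.toReal_pos (hPZi Z h i) (P.apply_ne_top _)
      have hW : 0 < ∏ i, (ωA (Z i)).toReal := Finset.prod_pos fun i _ => hwi i
      have hprt : (piPMF n P Z).toReal = ∏ i, (P (Z i)).toReal := by
        rw [hpiP, ENNReal.toReal_prod]
      have hpr : 0 < (piPMF n P Z).toReal := by
        rw [hprt]; exact Finset.prod_pos fun i _ => hpi i
      have hstepA : ∑ i, φ (Z i)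
          = Real.log ((∏ i, (ωA (Z i)).toReal) / (piPMF n P Z).toReal) := by
        rw [hprt, ← Finset.prod_div_distrib,
          Real.log_prod (fun i _ => div_ne_zero (hwi i).ne' (hpi i).ne')]
      have hstepB : Real.log ((∏ i, (ωA (Z i)).toReal) / (piPMF n P Z).toReal)
          = Real.log ((μA Z).toReal / (piPMF n P Z).toReal)
            - Real.log ((μA Z).toReal / (∏ i, (ωA (Z i)).toReal)) := by
        rw [← Real.log_div (by positivity) (by positivity)]
        congr 1
        field_simp
      have hstepC : (μA Z).toReal - ∏ i, (ωA (Z i)).toReal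
          ≤ (μA Z).toReal * Real.log ((μA Z).toReal / (∏ i, (ωA (Z i)).toReal)) :=
        mul_log_div_ge ha hW
      have hstepD := hK1 Z
      rw [hstepA, hstepB, mul_sub, hstepD]
      linarith
  -- ENNReal positive/negative parts of the marginal KL sum
  set φp : X → ℝ := fun u => max (φ u) 0 with hφpdef
  set φm : X → ℝ := fun u => max (-φ u) 0 with hφmdef
  have hφp0 : ∀ u, 0 ≤ φp u := fun u => le_max_right _ _
  have hφm0 : ∀ u, 0 ≤ φm u := fun u => le_max_right _ _
  have hφ_split : ∀ u, φ u = φp u - φm u := by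
    intro u
    rw [hφpdef, hφmdef]
    rcases le_total (φ u) 0 with h | h
    · simp only [max_eq_right h, max_eq_left (by linarith : (0:ℝ) ≤ -φ u)]; ring
    · simp only [max_eq_left h, max_eq_right (by linarith : -φ u ≤ 0)]; ring
  have hφp_plus : ∀ u, φp u = φ u + φm u := by
    intro u; have := hφ_split u; linarith
  -- marginalization in ℝ≥0∞
  have hmarg_e : ∀ (i : Fin n) (f : X → ℝ≥0∞),
      ∑' Z, μA Z * f (Z i) = ∑' u, ωA u * f u := by
    intro i f
    have := marginal_ennreal μA (fun Z => Z i) f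
    rw [← hωA i] at this
    exact this
  set Sm : ℝ≥0∞ := ∑' u, ωA u * ENNReal.ofReal (φm u) with hSmdef
  set Sp : ℝ≥0∞ := ∑' u, ωA u * ENNReal.ofReal (φp u) with hSpdef
  have hSm_le : Sm ≤ 1 := by
    rw [hSmdef, ← P.tsum_coe]
    refine Summable.tsum_le_tsum (fun u => ?_) ENNReal.summable ENNReal.summable
    by_cases hu : ωA u = 0
    · rw [hu, zero_mul]; exact zero_le
    · have hP0 : P u ≠ 0 := hωuP u hu
      have hw : 0 < (ωA u).toReal := ENNReal.toReal_pos hu (ωA.apply_ne_top u)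
      have hp : 0 < (P u).toReal := ENNReal.toReal_pos hP0 (P.apply_ne_top u)
      have hreal : (ωA u).toReal * φm u ≤ (P u).toReal := by
        simp only [hφmdef, hφdef]
        rcases le_total (-Real.log ((ωA u).toReal / (P u).toReal)) 0 with h | h
        · rw [max_eq_right h, mul_zero]; exact hp.le
        · rw [max_eq_left h]
          have hlog : -Real.log ((ωA u).toReal / (P u).toReal)
              = Real.log ((P u).toReal / (ωA u).toReal) := by
            rw [← Real.log_inv, inv_div]
          rw [hlog]
          have h1 : Real.log ((P u).toReal / (ωA u).toReal)
              ≤ (P u).toReal / (ωA u).toReal - 1 :=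
            Real.log_le_sub_one_of_pos (by positivity)
          have h2 := mul_le_mul_of_nonneg_left h1 hw.le
          have h3 : (ωA u).toReal * ((P u).toReal / (ωA u).toReal - 1)
              = (P u).toReal - (ωA u).toReal := by field_simp
          nlinarith
      calc ωA u * ENNReal.ofReal (φm u)
          = ENNReal.ofReal ((ωA u).toReal * φm u) := by
            rw [ENNReal.ofReal_mul ENNReal.toReal_nonneg, ENNReal.ofReal_toReal (ωA.apply_ne_top u)]
        _ ≤ ENNReal.ofReal (P u).toReal := ENNReal.ofReal_le_ofReal hreal
        _ = P u := ENNReal.ofReal_toReal (P.apply_ne_top u)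
  -- finiteness of the positive part, via the superadditivity bound
  have hn0 : (n : ℝ≥0∞) ≠ 0 := by exact_mod_cast (Nat.cast_ne_zero (R := ℝ≥0∞)).2 (NeZero.ne n)
  have hofW : ∀ Z : Fin n → X,
      ENNReal.ofReal (∏ i, (ωA (Z i)).toReal) = piPMF n ωA Z := by
    intro Z
    rw [hpiP ωA Z, ← ENNReal.toReal_prod]
    exact ENNReal.ofReal_toReal (ENNReal.prod_lt_top fun i _ => (ωA.apply_lt_top _)).ne
  have hSp_fin : Sp ≠ ∞ := by
    have h1 : ∀ i : Fin n, ∑' Z, μA Z * ENNReal.ofReal (φp (Z i)) = Sp :=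
      fun i => (hmarg_e i fun u => ENNReal.ofReal (φp u)).trans hSpdef.symm
    have h2 : (n : ℝ≥0∞) * Sp = ∑ _i : Fin n, Sp := by
      rw [Finset.sum_const, Finset.card_univ, Fintype.card_fin, nsmul_eq_mul]
    have key : (n : ℝ≥0∞) * Sp ≤ (ENNReal.ofReal c0 + 1) + (n : ℝ≥0∞) * 1 := by
      rw [h2]
      calc ∑ _i : Fin n, Sp
          = ∑ i : Fin n, ∑' Z, μA Z * ENNReal.ofReal (φp (Z i)) :=
            (Finset.sum_congr rfl fun i _ => (h1 i).symm)
        _ = ∑' Z, ∑ i : Fin n, μA Z * ENNReal.ofReal (φp (Z i)) :=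
            (Summable.tsum_finsetSum fun i _ => ENNReal.summable).symm
        _ ≤ ∑' Z, (μA Z * ENNReal.ofReal (max (∑ i, φ (Z i)) 0)
              + ∑ i : Fin n, μA Z * ENNReal.ofReal (φm (Z i))) := by
            refine Summable.tsum_le_tsum (fun Z => ?_) ENNReal.summable ENNReal.summable
            have hsum_pm : ∑ i, φp (Z i) ≤ max (∑ i, φ (Z i)) 0 + ∑ i, φm (Z i) := by
              have he : ∑ i, φp (Z i) = (∑ i, φ (Z i)) + ∑ i, φm (Z i) := by
                rw [← Finset.sum_add_distrib]
                exact Finset.sum_congr rfl fun i _ => hφp_plus (Z i)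
              rw [he]
              have := le_max_left (∑ i, φ (Z i)) 0
              linarith
            calc ∑ i : Fin n, μA Z * ENNReal.ofReal (φp (Z i))
                = μA Z * ∑ i : Fin n, ENNReal.ofReal (φp (Z i)) := by rw [Finset.mul_sum]
              _ = μA Z * ENNReal.ofReal (∑ i, φp (Z i)) := by
                  rw [ENNReal.ofReal_sum_of_nonneg (fun i _ => hφp0 _)]
              _ ≤ μA Z * ENNReal.ofReal (max (∑ i, φ (Z i)) 0 + ∑ i, φm (Z i)) :=
                  mul_le_mul_right (ENNReal.ofReal_le_ofReal hsum_pm) _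
              _ ≤ μA Z * (ENNReal.ofReal (max (∑ i, φ (Z i)) 0)
                    + ENNReal.ofReal (∑ i, φm (Z i))) :=
                  mul_le_mul_right ENNReal.ofReal_add_le _
              _ = μA Z * ENNReal.ofReal (max (∑ i, φ (Z i)) 0)
                  + ∑ i : Fin n, μA Z * ENNReal.ofReal (φm (Z i)) := by
                  rw [mul_add, ENNReal.ofReal_sum_of_nonneg (fun i _ => hφm0 _), Finset.mul_sum]
        _ ≤ (ENNReal.ofReal c0 + 1) + (n : ℝ≥0∞) * 1 := by
            rw [Summable.tsum_add ENNReal.summable ENNReal.summable]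
            have hfirst : ∑' Z, μA Z * ENNReal.ofReal (max (∑ i, φ (Z i)) 0)
                ≤ ENNReal.ofReal c0 + 1 := by
              calc ∑' Z, μA Z * ENNReal.ofReal (max (∑ i, φ (Z i)) 0)
                  ≤ ∑' Z, (μA Z * ENNReal.ofReal c0 + piPMF n ωA Z) := by
                    refine Summable.tsum_le_tsum (fun Z => ?_) ENNReal.summable ENNReal.summable
                    have hW0 : (0:ℝ) ≤ ∏ i, (ωA (Z i)).toReal :=
                      Finset.prod_nonneg fun i _ => ENNReal.toReal_nonneg
                    have ha0 : (0:ℝ) ≤ (μA Z).toReal := ENNReal.toReal_nonneg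
                    have hZle : (μA Z).toReal * max (∑ i, φ (Z i)) 0
                        ≤ (μA Z).toReal * c0 + ∏ i, (ωA (Z i)).toReal := by
                      have h3 := hK3 Z
                      rcases le_total (∑ i, φ (Z i)) 0 with h | h
                      · rw [max_eq_right h, mul_zero]
                        have : 0 ≤ (μA Z).toReal * c0 := mul_nonneg ha0 hc0
                        linarith
                      · rw [max_eq_left h]
                        linarith
                    calc μA Z * ENNReal.ofReal (max (∑ i, φ (Z i)) 0)
                        = ENNReal.ofReal ((μA Z).toReal * max (∑ i, φ (Z i)) 0) := by
                          rw [ENNReal.ofReal_mul ENNReal.toReal_nonneg,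
                            ENNReal.ofReal_toReal (μA.apply_ne_top Z)]
                      _ ≤ ENNReal.ofReal ((μA Z).toReal * c0 + ∏ i, (ωA (Z i)).toReal) :=
                          ENNReal.ofReal_le_ofReal hZle
                      _ ≤ ENNReal.ofReal ((μA Z).toReal * c0)
                          + ENNReal.ofReal (∏ i, (ωA (Z i)).toReal) := ENNReal.ofReal_add_le
                      _ = μA Z * ENNReal.ofReal c0 + piPMF n ωA Z := by
                          rw [ENNReal.ofReal_mul ENNReal.toReal_nonneg,
                            ENNReal.ofReal_toReal (μA.apply_ne_top Z), hofW Z]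
                _ = ENNReal.ofReal c0 + 1 := by
                    rw [Summable.tsum_add ENNReal.summable ENNReal.summable, ENNReal.tsum_mul_right,
                      μA.tsum_coe, one_mul, (piPMF n ωA).tsum_coe]
            have hsecond : ∑' Z, ∑ i : Fin n, μA Z * ENNReal.ofReal (φm (Z i))
                ≤ (n : ℝ≥0∞) * 1 := by
              calc ∑' Z, ∑ i : Fin n, μA Z * ENNReal.ofReal (φm (Z i))
                  = ∑ i : Fin n, ∑' Z, μA Z * ENNReal.ofReal (φm (Z i)) :=
                    Summable.tsum_finsetSum fun i _ => ENNReal.summable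
                _ = ∑ _i : Fin n, Sm := Finset.sum_congr rfl fun i _ =>
                    (hmarg_e i fun u => ENNReal.ofReal (φm u)).trans hSmdef.symm
                _ = (n:ℝ≥0∞) * Sm := by
                    rw [Finset.sum_const, Finset.card_univ, Fintype.card_fin, nsmul_eq_mul]
                _ ≤ (n:ℝ≥0∞) * 1 := mul_le_mul_right hSm_le _
            exact add_le_add hfirst hsecond
    have hfin : (ENNReal.ofReal c0 + 1) + (n : ℝ≥0∞) * 1 ≠ ∞ := by
      simp [ENNReal.ofReal_ne_top]
    intro hcon
    rw [hcon, ENNReal.mul_top hn0] at key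
    exact hfin (top_le_iff.1 key)
  -- summability hypothesis for real marginalization
  have habs : ∑' u, ωA u * ENNReal.ofReal |φ u| ≠ ∞ := by
    have hpoint : ∀ u, ωA u * ENNReal.ofReal |φ u|
        = ωA u * ENNReal.ofReal (φp u) + ωA u * ENNReal.ofReal (φm u) := by
      intro u
      have habs_eq : |φ u| = φp u + φm u := by
        simp only [hφpdef, hφmdef]
        rcases le_total (φ u) 0 with h | h
        · rw [abs_of_nonpos h, max_eq_right h, max_eq_left (by linarith : (0:ℝ) ≤ -φ u)]; ring
        · rw [abs_of_nonneg h, max_eq_left h, max_eq_right (by linarith : -φ u ≤ 0)]; ring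
      rw [habs_eq, ENNReal.ofReal_add (hφp0 u) (hφm0 u), mul_add]
    rw [tsum_congr hpoint, Summable.tsum_add ENNReal.summable ENNReal.summable]
    refine ENNReal.add_ne_top.2 ⟨by rw [← hSpdef]; exact hSp_fin, ?_⟩
    exact ne_top_of_le_ne_top ENNReal.one_ne_top (hSmdef ▸ hSm_le)
  -- real marginalization per coordinate
  have hmr : ∀ i : Fin n, (∑' Z, (μA Z).toReal * φ (Z i) = ∑' u, (ωA u).toReal * φ u)
      ∧ Summable (fun Z => (μA Z).toReal * φ (Z i)) := by
    intro i
    have h := marginal_real μA (fun Z => Z i) φ (by rw [← hωA i]; exact habs)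
    rw [← hωA i] at h
    exact ⟨h.1, h.2.1⟩
  have hsumω : Summable (fun u => (ωA u).toReal * φ u) := by
    have h := marginal_real μA (fun Z => Z i0) φ (by rw [← hωA i0]; exact habs)
    rw [← hωA i0] at h
    exact h.2.2
  -- summable families on the sample side
  have Sa : Summable (fun Z : Fin n → X => (μA Z).toReal) := by
    refine ENNReal.summable_toReal ?_
    rw [μA.tsum_coe]; exact ENNReal.one_ne_top
  have Sw : Summable (fun Z : Fin n → X => ∏ i, (ωA (Z i)).toReal) := by
    have h := ENNReal.summable_toReal (f := fun Z => piPMF n ωA Z)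
      (by rw [(piPMF n ωA).tsum_coe]; exact ENNReal.one_ne_top)
    refine h.congr fun Z => ?_
    show ((piPMF n ωA) Z).toReal = _
    rw [hpiP, ENNReal.toReal_prod]
  have hasum : ∑' Z : Fin n → X, (μA Z).toReal = 1 := by
    rw [tsum_toReal_of_ne_top (fun Z => μA.apply_ne_top Z), μA.tsum_coe, ENNReal.toReal_one]
  have hWsum : ∑' Z : Fin n → X, ∏ i, (ωA (Z i)).toReal = 1 := by
    have h1 : ∀ Z : Fin n → X, ∏ i, (ωA (Z i)).toReal = (piPMF n ωA Z).toReal := by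
      intro Z; rw [hpiP, ENNReal.toReal_prod]
    rw [tsum_congr h1, tsum_toReal_of_ne_top (fun Z => (piPMF n ωA).apply_ne_top Z),
      (piPMF n ωA).tsum_coe, ENNReal.toReal_one]
  -- part 2 core: n · D(ω‖P) ≤ c0
  have hsum_lhs : Summable (fun Z => (μA Z).toReal * ∑ i, φ (Z i)) := by
    have he : (fun Z : Fin n → X => (μA Z).toReal * ∑ i, φ (Z i))
        = fun Z => ∑ i : Fin n, (μA Z).toReal * φ (Z i) := by
      funext Z; rw [Finset.mul_sum]
    rw [he]
    exact summable_sum fun i _ => (hmr i).2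
  have hchain : (n : ℝ) * klDiv ωA P ≤ c0 := by
    have e1 : klDiv ωA P = ∑' u, (ωA u).toReal * φ u := rfl
    have e2 : (n:ℝ) * ∑' u, (ωA u).toReal * φ u
        = ∑ i : Fin n, ∑' Z, (μA Z).toReal * φ (Z i) := by
      rw [Finset.sum_congr rfl fun i _ => (hmr i).1, Finset.sum_const, Finset.card_univ,
        Fintype.card_fin, nsmul_eq_mul]
    have e3 : ∑ i : Fin n, ∑' Z, (μA Z).toReal * φ (Z i)
        = ∑' Z, (μA Z).toReal * ∑ i, φ (Z i) := by
      rw [← Summable.tsum_finsetSum fun i _ => (hmr i).2]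
      exact tsum_congr fun Z => (Finset.mul_sum _ _ _).symm
    have e4 : ∑' Z, (μA Z).toReal * ∑ i, φ (Z i)
        ≤ ∑' Z, ((μA Z).toReal * c0 - (μA Z).toReal + ∏ i, (ωA (Z i)).toReal) :=
      Summable.tsum_le_tsum hK3 hsum_lhs (((Sa.mul_right c0).sub Sa).add Sw)
    have e5 : ∑' Z, ((μA Z).toReal * c0 - (μA Z).toReal + ∏ i, (ωA (Z i)).toReal) = c0 := by
      rw [Summable.tsum_add ((Sa.mul_right c0).sub Sa) Sw, Summable.tsum_sub (Sa.mul_right c0) Sa,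
        tsum_mul_right, hasum, hWsum]
      ring
    rw [e1, e2, e3]
    rw [e5] at e4
    exact e4
  -- the averaged marginal identity
  have hemp : ∀ (Z : Fin n → X) (y : X),
      empiricalPMF n Z y = ∑ i : Fin n, (if y = Z i then ((n:ℝ≥0∞))⁻¹ else 0) := by
    intro Z y
    rw [empiricalPMF, PMF.map_apply, tsum_fintype]
    refine Finset.sum_congr rfl fun i _ => ?_
    by_cases h : y = Z i
    · rw [if_pos h, if_pos h, PMF.uniformOfFintype_apply, Fintype.card_fin]
    · rw [if_neg h, if_neg h]
  have hmarg : ∀ y, ∑' Z, μA Z * empiricalPMF n Z y = ωA y := by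
    intro y
    calc ∑' Z, μA Z * empiricalPMF n Z y
        = ∑' Z, ∑ i : Fin n, (if y = Z i then μA Z * (n:ℝ≥0∞)⁻¹ else 0) := by
          refine tsum_congr fun Z => ?_
          rw [hemp Z y, Finset.mul_sum]
          refine Finset.sum_congr rfl fun i _ => ?_
          by_cases h : y = Z i
          · rw [if_pos h, if_pos h]
          · rw [if_neg h, if_neg h, mul_zero]
      _ = ∑ i : Fin n, ∑' Z, (if y = Z i then μA Z * (n:ℝ≥0∞)⁻¹ else 0) :=
          Summable.tsum_finsetSum fun _ _ => ENNReal.summable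
      _ = ∑ _i : Fin n, ωA y * (n:ℝ≥0∞)⁻¹ := by
          refine Finset.sum_congr rfl fun i _ => ?_
          have hco : ∀ Z, (if y = Z i then μA Z * (n:ℝ≥0∞)⁻¹ else 0)
              = (if y = Z i then μA Z else 0) * (n:ℝ≥0∞)⁻¹ := by
            intro Z; by_cases h : y = Z i <;> simp [h]
          rw [tsum_congr hco, ENNReal.tsum_mul_right]
          congr 1
          rw [hωA i, PMF.map_apply]
      _ = ωA y := by
          rw [Finset.sum_const, Finset.card_univ, Fintype.card_fin, nsmul_eq_mul,
            ← mul_assoc, mul_comm ((n:ℝ≥0∞)) (ωA y), mul_assoc,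
            ENNReal.mul_inv_cancel hn0 (ENNReal.natCast_ne_top n), mul_one]
  -- conversion of the finiteness hypothesis for part 1
  have hSp' : ∑' u, ENNReal.ofReal
      (max ((ωA u).toReal * Real.log ((ωA u).toReal / (P u).toReal)) 0) ≠ ∞ := by
    have hpt : ∀ u, ENNReal.ofReal
        (max ((ωA u).toReal * Real.log ((ωA u).toReal / (P u).toReal)) 0)
        = ωA u * ENNReal.ofReal (φp u) := by
      intro u
      have h1 : max ((ωA u).toReal * φ u) 0 = (ωA u).toReal * φp u := by
        simp only [hφpdef]
        rw [mul_max_of_nonneg _ _ ENNReal.toReal_nonneg, mul_zero]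
      have h2 : ENNReal.ofReal ((ωA u).toReal * φp u)
          = ωA u * ENNReal.ofReal (φp u) := by
        rw [ENNReal.ofReal_mul ENNReal.toReal_nonneg, ENNReal.ofReal_toReal (ωA.apply_ne_top u)]
      simp only [hφdef] at h1
      rw [h1] at *
      exact h2
    rw [tsum_congr hpt, ← hSpdef]
    exact hSp_fin
  -- part 1
  have hpart1 : klDiv PAstar P ≤ klDiv ωA P :=
    klDiv_le_klDiv_omega n P A hconv PAstar hmin μA ωA hmarg hsuppA hSp'
  -- part 2
  have hnR : (0:ℝ) < n := Nat.cast_pos.2 (Nat.pos_of_ne_zero (NeZero.ne n))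
  refine ⟨hpart1, ?_⟩
  have h1 : (n:ℝ) * klDiv PAstar P ≤ c0 :=
    le_trans (mul_le_mul_of_nonneg_left hpart1 hnR.le) hchain
  rw [hc0def] at h1
  rw [div_mul_eq_mul_div, one_mul, div_le_iff₀ hnR]
  nlinarith
end
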